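/- arXiv:1011.0667 — 6 statements merged into one kernel-verified Lean document; each statement's English description precedes it below -/
import Mathlib

section
/- Let E be a measurable subset of ℝⁿ and let 0 < β < n. Then ∫_E |z|^(β−n) dz ≤ C·|E|^(β/n), where |E| denotes the Lebesgue measure of E and C depends only on n and β. -/
open MeasureTheory Real Set
open scoped ENNReal NNReal

lemma aux_key (n : ℕ) (hn : 0 < n) (β : ℝ) (hβ : 0 < β) (hβn : β < n) (κ m : ℝ)
    (hκ : 0 < κ) (hm : 0 < m) :
    m * ((m / κ) ^ ((β - n) / (n : ℝ))) +
      κ * (-(((m / κ) ^ ((β - n) / (n : ℝ))) ^ ((n : ℝ) / (β - n) + 1)) / ((n : ℝ) / (β - n) + 1))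
      = ((n / β) * κ ^ (1 - β / (n : ℝ))) * m ^ (β / (n : ℝ)) := by
  have hn' : (0 : ℝ) < n := by exact_mod_cast hn
  have hne : β - (n : ℝ) ≠ 0 := by linarith
  have hA : 0 < m / κ := div_pos hm hκ
  have e1 : (n : ℝ) / (β - n) + 1 = β / (β - n) := by field_simp; ring
  have e2 : ((β - n) / (n : ℝ)) * (β / (β - n)) = β / n := by
    field_simp
  have h1 : ((m / κ) ^ ((β - n) / (n : ℝ))) ^ (β / (β - n)) = (m / κ) ^ (β / (n : ℝ)) := by
    rw [← Real.rpow_mul hA.le, e2]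
  have e3 : (β - n) / (n : ℝ) = β / n - 1 := by field_simp
  have h2 : (m / κ) ^ ((β - n) / (n : ℝ)) = (m / κ) ^ (β / (n : ℝ)) / (m / κ) := by
    rw [e3, Real.rpow_sub hA, Real.rpow_one]
  have h3 : κ ^ (1 - β / (n : ℝ)) = κ / κ ^ (β / (n : ℝ)) := by
    rw [Real.rpow_sub hκ, Real.rpow_one]
  have h4 : (m / κ) ^ (β / (n : ℝ)) = m ^ (β / (n : ℝ)) / κ ^ (β / (n : ℝ)) :=
    Real.div_rpow hm.le hκ.le _
  have hκp : (0 : ℝ) < κ ^ (β / (n : ℝ)) := Real.rpow_pos_of_pos hκ _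
  have hβne : β / (β - n) ≠ 0 := div_ne_zero hβ.ne' hne
  rw [e1, h1, h2, h3, h4]
  field_simp
  ring

theorem stmt_0 (n : ℕ) (hn : 0 < n) (β : ℝ) (hβ : 0 < β) (hβn : β < n) :
    ∃ C : ℝ, 0 < C ∧ ∀ E : Set (EuclideanSpace ℝ (Fin n)), MeasurableSet E →
      ∫⁻ z in E, ENNReal.ofReal (‖z‖ ^ (β - (n : ℝ))) ≤
        ENNReal.ofReal C * (volume E) ^ (β / (n : ℝ)) := by
  have hn' : (0 : ℝ) < n := by exact_mod_cast hn
  have hβn' : β - (n : ℝ) < 0 := by linarith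
  set κE : ℝ≥0∞ := volume (Metric.ball (0 : EuclideanSpace ℝ (Fin n)) 1) with hκE
  have hκE0 : κE ≠ 0 := (Metric.measure_ball_pos volume 0 one_pos).ne'
  have hκEtop : κE ≠ ⊤ := measure_ball_lt_top.ne
  set κ : ℝ := κE.toReal with hκdef
  have hκ : 0 < κ := ENNReal.toReal_pos hκE0 hκEtop
  refine ⟨((n : ℝ) / β) * κ ^ (1 - β / (n : ℝ)), by positivity, fun E hE => ?_⟩
  -- trivial cases
  rcases eq_or_ne (volume E) 0 with hμ0 | hμ0
  · rw [setLIntegral_measure_zero _ _ hμ0]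
    exact zero_le
  rcases eq_or_ne (volume E) ⊤ with hμtop | hμtop
  · rw [hμtop, ENNReal.top_rpow_of_pos (by positivity), ENNReal.mul_top]
    · exact le_top
    · simp only [ne_eq, ENNReal.ofReal_eq_zero, not_le]
      positivity
  set m : ℝ := (volume E).toReal with hmdef
  have hm : 0 < m := ENNReal.toReal_pos hμ0 hμtop
  have hμE : volume E = ENNReal.ofReal m := (ENNReal.ofReal_toReal hμtop).symm
  set s : ℝ := (n : ℝ) / (β - n) with hsdef
  have hs : s < -1 := by
    rw [hsdef, div_lt_iff_of_neg hβn']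
    linarith
  set T : ℝ := (m / κ) ^ ((β - n) / (n : ℝ)) with hTdef
  have hT : 0 < T := Real.rpow_pos_of_pos (div_pos hm hκ) _
  -- layer cake
  have hmeas : Measurable fun z : EuclideanSpace ℝ (Fin n) => ‖z‖ ^ (β - (n : ℝ)) := by
    fun_prop
  rw [lintegral_eq_lintegral_meas_le (volume.restrict E)
    (Filter.Eventually.of_forall fun z => Real.rpow_nonneg (norm_nonneg z) _)
    hmeas.aemeasurable]
  -- pointwise bounds on the distribution function
  have hbound1 : ∀ t ∈ Ioc (0 : ℝ) T,
      (volume.restrict E) {z : EuclideanSpace ℝ (Fin n) | t ≤ ‖z‖ ^ (β - (n : ℝ))}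
        ≤ volume E := fun t _ => by
    calc (volume.restrict E) {z | t ≤ ‖z‖ ^ (β - (n : ℝ))}
        ≤ (volume.restrict E) univ := measure_mono (subset_univ _)
      _ = volume E := by rw [Measure.restrict_apply_univ]
  have hbound2 : ∀ t ∈ Ioi T,
      (volume.restrict E) {z : EuclideanSpace ℝ (Fin n) | t ≤ ‖z‖ ^ (β - (n : ℝ))}
        ≤ κE * ENNReal.ofReal (t ^ s) := by
    intro t ht
    have ht0 : 0 < t := hT.trans ht
    have hsub : {z : EuclideanSpace ℝ (Fin n) | t ≤ ‖z‖ ^ (β - (n : ℝ))}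
        ⊆ Metric.closedBall 0 (t ^ ((β - (n : ℝ))⁻¹)) := by
      intro z hz
      simp only [mem_setOf_eq] at hz
      have hz0 : 0 < ‖z‖ := by
        rcases eq_or_lt_of_le (norm_nonneg z) with h | h
        · exfalso
          rw [← h, Real.zero_rpow hβn'.ne] at hz
          linarith
        · exact h
      rw [Metric.mem_closedBall, dist_zero_right]
      exact (Real.le_rpow_inv_iff_of_neg hz0 ht0 hβn').mpr hz
    calc (volume.restrict E) {z | t ≤ ‖z‖ ^ (β - (n : ℝ))}
        ≤ volume (Metric.closedBall (0 : EuclideanSpace ℝ (Fin n)) (t ^ ((β - (n : ℝ))⁻¹))) :=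
          le_trans (measure_mono hsub) (Measure.restrict_apply_le _ _)
      _ = ENNReal.ofReal ((t ^ ((β - (n : ℝ))⁻¹)) ^ Module.finrank ℝ (EuclideanSpace ℝ (Fin n))) * κE :=
          Measure.addHaar_closedBall _ _ (Real.rpow_nonneg ht0.le _)
      _ = κE * ENNReal.ofReal (t ^ s) := by
          rw [finrank_euclideanSpace_fin, mul_comm]
          congr 2
          rw [← Real.rpow_natCast (t ^ ((β - (n : ℝ))⁻¹)) n, ← Real.rpow_mul ht0.le, hsdef]
          congr 1
          rw [inv_mul_eq_div]
  -- split the t-integral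
  have hsplit : (∫⁻ t in Ioi (0 : ℝ),
        (volume.restrict E) {z : EuclideanSpace ℝ (Fin n) | t ≤ ‖z‖ ^ (β - (n : ℝ))})
      ≤ volume E * ENNReal.ofReal T
        + κE * ∫⁻ t in Ioi T, ENNReal.ofReal (t ^ s) := by
    rw [← Ioc_union_Ioi_eq_Ioi hT.le]
    refine le_trans (lintegral_union_le _ _ _) (add_le_add ?_ ?_)
    · calc ∫⁻ t in Ioc (0:ℝ) T, (volume.restrict E) {z | t ≤ ‖z‖ ^ (β - (n : ℝ))}
          ≤ ∫⁻ _ in Ioc (0:ℝ) T, volume E := setLIntegral_mono' measurableSet_Ioc hbound1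
        _ = volume E * ENNReal.ofReal T := by
            rw [setLIntegral_const, Real.volume_Ioc, sub_zero]
    · calc ∫⁻ t in Ioi T, (volume.restrict E) {z | t ≤ ‖z‖ ^ (β - (n : ℝ))}
          ≤ ∫⁻ t in Ioi T, κE * ENNReal.ofReal (t ^ s) :=
            setLIntegral_mono' measurableSet_Ioi hbound2
        _ = κE * ∫⁻ t in Ioi T, ENNReal.ofReal (t ^ s) := lintegral_const_mul' _ _ hκEtop
  refine hsplit.trans ?_
  -- compute the tail integral
  have htail : (∫⁻ t in Ioi T, ENNReal.ofReal (t ^ s)) = ENNReal.ofReal (-T ^ (s + 1) / (s + 1)) := by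
    rw [← ofReal_integral_eq_lintegral_ofReal (integrableOn_Ioi_rpow_of_lt hs hT)
      ((ae_restrict_iff' measurableSet_Ioi).mpr (Filter.Eventually.of_forall
        fun t ht => Real.rpow_nonneg (hT.trans ht).le _)),
      integral_Ioi_rpow_of_lt hs hT]
  rw [htail]
  have hκEofReal : κE = ENNReal.ofReal κ := (ENNReal.ofReal_toReal hκEtop).symm
  have hs1 : s + 1 < 0 := by linarith
  have hX : 0 ≤ -T ^ (s + 1) / (s + 1) :=
    div_nonneg_of_nonpos (neg_nonpos.mpr (Real.rpow_pos_of_pos hT _).le) hs1.le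
  have hC : 0 ≤ (n : ℝ) / β * κ ^ (1 - β / (n : ℝ)) := by positivity
  refine le_of_eq ?_
  calc volume E * ENNReal.ofReal T + κE * ENNReal.ofReal (-T ^ (s + 1) / (s + 1))
      = ENNReal.ofReal (m * T + κ * (-T ^ (s + 1) / (s + 1))) := by
        rw [hμE, hκEofReal, ← ENNReal.ofReal_mul hm.le, ← ENNReal.ofReal_mul hκ.le,
          ← ENNReal.ofReal_add (by positivity) (mul_nonneg hκ.le hX)]
    _ = ENNReal.ofReal ((n : ℝ) / β * κ ^ (1 - β / (n : ℝ)) * m ^ (β / (n : ℝ))) := by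
        rw [hTdef, hsdef, aux_key n hn β hβ hβn κ m hκ hm]
    _ = ENNReal.ofReal ((n : ℝ) / β * κ ^ (1 - β / (n : ℝ))) * volume E ^ (β / (n : ℝ)) := by
        rw [ENNReal.ofReal_mul hC, hμE, ENNReal.ofReal_rpow_of_pos hm]
end

section
/- For every x ∈ ℝⁿ and t > 0, the absolute value of the principal value integral p.v. ∫_{B(x,t)} y/|y|^{n+1} dy is at most C·log((|x|+t)/||x|−t|), with C depending only on n. -/
open MeasureTheory Topology Metric Set Filter Pointwise

noncomputable def fker (n : ℕ) (y : EuclideanSpace ℝ (Fin n)) : EuclideanSpace ℝ (Fin n) :=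
  (‖y‖ ^ (-((n : ℝ) + 1))) • y

lemma fker_zero (n : ℕ) : fker n 0 = 0 := by simp [fker]

lemma rpow_succ_mul {z : ℝ} (hz : 0 < z) (n : ℕ) :
    z ^ (-((n : ℝ) + 1)) * z = z ^ (-(n : ℝ)) := by
  nth_rewrite 2 [← Real.rpow_one z]
  rw [← Real.rpow_add hz]
  norm_num

lemma norm_fker {n : ℕ} {y : EuclideanSpace ℝ (Fin n)} (hy : y ≠ 0) :
    ‖fker n y‖ = ‖y‖ ^ (-(n : ℝ)) := by
  have h0 : (0:ℝ) < ‖y‖ := norm_pos_iff.2 hy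
  rw [fker, norm_smul, Real.norm_eq_abs,
    abs_of_nonneg (Real.rpow_nonneg (norm_nonneg _) _), rpow_succ_mul h0]

lemma fker_neg (n : ℕ) (y : EuclideanSpace ℝ (Fin n)) : fker n (-y) = - fker n y := by
  simp [fker]

lemma integrableOn_fker (n : ℕ) {R ε : ℝ} (hε : 0 < ε) :
    IntegrableOn (fker n) (closedBall (0 : EuclideanSpace ℝ (Fin n)) R \ ball 0 ε) := by
  have hcompact : IsCompact (closedBall (0 : EuclideanSpace ℝ (Fin n)) R \ ball 0 ε) :=
    (isCompact_closedBall _ _).diff isOpen_ball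
  refine ContinuousOn.integrableOn_compact hcompact fun y hy => ?_
  have h0 : ‖y‖ ≠ 0 := by
    have h1 : ε ≤ ‖y‖ := by
      have := hy.2
      simpa [mem_ball_zero_iff, not_lt] using this
    exact ne_of_gt (lt_of_lt_of_le hε h1)
  have hc : ContinuousAt (fker n) y :=
    ((Real.continuousAt_rpow_const _ _ (Or.inl h0)).comp
      continuous_norm.continuousAt).smul continuousAt_id
  exact hc.continuousWithinAt

lemma integrableOn_fker' (n : ℕ) {s : Set (EuclideanSpace ℝ (Fin n))} {R ε : ℝ} (hε : 0 < ε)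
    (hs : s ⊆ closedBall 0 R \ ball 0 ε) : IntegrableOn (fker n) s :=
  (integrableOn_fker n hε).mono_set hs

lemma integral_fker_symm (n : ℕ) {s : Set (EuclideanSpace ℝ (Fin n))}
    (hm : MeasurableSet s) (hs : ∀ y, y ∈ s ↔ -y ∈ s)
    (hi : IntegrableOn (fker n) s) : ∫ y in s, fker n y = 0 := by
  set g : EuclideanSpace ℝ (Fin n) → EuclideanSpace ℝ (Fin n) := s.indicator (fker n) with hg
  have h2 : ∀ y, g (-y) = - g y := by
    intro y
    by_cases h : y ∈ s
    · rw [hg, indicator_of_mem ((hs y).1 h), indicator_of_mem h, fker_neg]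
    · rw [hg, indicator_of_notMem (fun hc => h ((hs y).2 hc)), indicator_of_notMem h, neg_zero]
  have key : ∫ y in s, fker n y = ∫ y, g y := (integral_indicator hm).symm
  have h3 : ∫ y, g y = - ∫ y, g y := by
    conv_lhs => rw [← integral_neg_eq_self g volume]
    simp only [h2]
    rw [integral_neg]
  have h4 : ∫ y, g y = 0 := by
    have := h3
    have h5 : (2 : ℝ) • ∫ y, g y = 0 := by
      rw [two_smul]; nth_rewrite 2 [h3]; simp
    simpa using h5
  rw [key, h4]

lemma shell_integral (n : ℕ) (hn : 0 < n) {a b : ℝ} (ha : 0 < a) (hab : a ≤ b) :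
    ∫ y in closedBall (0 : EuclideanSpace ℝ (Fin n)) b \ ball 0 a, ‖fker n y‖ =
      (n * (volume (ball (0 : EuclideanSpace ℝ (Fin n)) 1)).toReal) * Real.log (b / a) := by
  haveI : Nonempty (Fin n) := ⟨⟨0, hn⟩⟩
  haveI : Nontrivial (EuclideanSpace ℝ (Fin n)) := inferInstance
  have hdim : Module.finrank ℝ (EuclideanSpace ℝ (Fin n)) = n := finrank_euclideanSpace_fin
  set g : ℝ → ℝ := (Icc a b).indicator (fun r => r ^ (-(n : ℝ))) with hg
  set S : Set (EuclideanSpace ℝ (Fin n)) := closedBall 0 b \ ball 0 a with hS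
  have hmemS : ∀ y : EuclideanSpace ℝ (Fin n), y ∈ S ↔ ‖y‖ ∈ Icc a b := by
    intro y
    simp [hS, mem_closedBall_zero_iff, mem_ball_zero_iff, not_lt, and_comm]
  have hSm : MeasurableSet S := measurableSet_closedBall.diff measurableSet_ball
  have step1 : ∫ y in S, ‖fker n y‖ = ∫ y : EuclideanSpace ℝ (Fin n), g ‖y‖ := by
    have : ∀ y : EuclideanSpace ℝ (Fin n), g ‖y‖ = S.indicator (fun y => ‖fker n y‖) y := by
      intro y
      by_cases h : y ∈ S
      · rw [indicator_of_mem h, hg, indicator_of_mem ((hmemS y).1 h)]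
        have hy0 : y ≠ 0 := by
          intro h0
          have := ((hmemS y).1 h).1
          rw [h0] at this; simp at this; linarith
        rw [norm_fker hy0]
      · rw [indicator_of_notMem h, hg, indicator_of_notMem (fun hc => h ((hmemS y).2 hc))]
    rw [integral_congr_ae (Filter.Eventually.of_forall this), integral_indicator hSm]
  rw [step1, MeasureTheory.integral_fun_norm_addHaar volume g, hdim]
  have step2 : ∫ r in Ioi (0:ℝ), r ^ (n - 1) • g r = Real.log (b / a) := by
    have h1 : ∀ r : ℝ, r ^ (n-1) • g r = (Icc a b).indicator (fun r => r ^ (n-1) * r ^ (-(n:ℝ))) r := by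
      intro r
      rw [hg]
      by_cases h : r ∈ Icc a b
      · rw [indicator_of_mem h, indicator_of_mem h, smul_eq_mul]
      · rw [indicator_of_notMem h, indicator_of_notMem h, smul_zero]
    rw [setIntegral_congr_fun measurableSet_Ioi (fun r _ => h1 r),
      setIntegral_indicator measurableSet_Icc]
    have h2 : Ioi (0:ℝ) ∩ Icc a b = Icc a b :=
      inter_eq_self_of_subset_right (fun r hr => lt_of_lt_of_le ha hr.1)
    rw [h2]
    have h3 : ∀ r ∈ Icc a b, r ^ (n-1) * r ^ (-(n:ℝ)) = r⁻¹ := by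
      intro r hr
      have hr0 : 0 < r := lt_of_lt_of_le ha hr.1
      rw [← Real.rpow_natCast r (n-1), ← Real.rpow_add hr0, Nat.cast_sub hn]
      have he : (n:ℝ) - ((1:ℕ):ℝ) + -(n:ℝ) = -1 := by push_cast; ring
      rw [he, Real.rpow_neg_one]
    rw [setIntegral_congr_fun measurableSet_Icc h3, integral_Icc_eq_integral_Ioc,
      ← intervalIntegral.integral_of_le hab,
      integral_inv (notMem_uIcc_of_lt ha (lt_of_lt_of_le ha hab))]
  rw [step2]
  simp only [nsmul_eq_mul, smul_eq_mul]
  rw [measureReal_def]; ring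

set_option maxHeartbeats 1000000 in
lemma caseA (n : ℕ) (hn : 0 < n) (x : EuclideanSpace ℝ (Fin n)) (t : ℝ) (ht : 0 < t)
    (hxt : ‖x‖ = t) (L : EuclideanSpace ℝ (Fin n))
    (hL : Filter.Tendsto (fun ε : ℝ => ∫ y in ball x t \ ball 0 ε, fker n y)
      (𝓝[>] 0) (𝓝 L)) : False := by
  haveI : Nonempty (Fin n) := ⟨⟨0, hn⟩⟩
  have hdim : Module.finrank ℝ (EuclideanSpace ℝ (Fin n)) = n := finrank_euclideanSpace_fin
  set I : ℝ → EuclideanSpace ℝ (Fin n) :=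
    fun ε => ∫ y in ball x t \ ball 0 ε, fker n y with hI
  set K : Set (EuclideanSpace ℝ (Fin n)) :=
    {y | t * ‖y‖ / 2 < (inner ℝ x y : ℝ)} with hK
  have hKopen : IsOpen K :=
    isOpen_lt ((continuous_const.mul continuous_norm).div_const 2)
      (continuous_const.inner continuous_id)
  -- scaling of the cone-ball intersections
  have hscale : ∀ s : ℝ, 0 < s →
      volume (K ∩ ball 0 s) = ENNReal.ofReal (s ^ n) * volume (K ∩ ball 0 1) := by
    intro s hs
    have hset : K ∩ ball 0 s = s • (K ∩ ball 0 1) := by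
      ext y
      rw [Set.mem_smul_set_iff_inv_smul_mem₀ hs.ne']
      have hnorm : ‖s⁻¹ • y‖ = s⁻¹ * ‖y‖ := by
        rw [norm_smul, Real.norm_eq_abs, abs_of_pos (inv_pos.2 hs)]
      have hinner : (inner ℝ x (s⁻¹ • y) : ℝ) = s⁻¹ * (inner ℝ x y : ℝ) :=
        real_inner_smul_right _ _ _
      simp only [mem_inter_iff, hK, mem_setOf_eq, mem_ball_zero_iff, hnorm, hinner]
      constructor
      · rintro ⟨h1, h2⟩
        refine ⟨?_, ?_⟩
        · rw [div_lt_iff₀ (by norm_num : (0:ℝ) < 2)] at h1 ⊢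
          nlinarith [inv_pos.2 hs]
        · have h3 := mul_lt_mul_of_pos_left h2 (inv_pos.2 hs)
          rwa [inv_mul_cancel₀ hs.ne'] at h3
      · rintro ⟨h1, h2⟩
        refine ⟨?_, ?_⟩
        · rw [div_lt_iff₀ (by norm_num : (0:ℝ) < 2)] at h1 ⊢
          have := (mul_lt_mul_iff_right₀ hs).2 h1
          calc t * ‖y‖ = s * (t * (s⁻¹ * ‖y‖)) := by field_simp
            _ < s * ((inner ℝ x y : ℝ) * s⁻¹ * 2) := by
                apply (mul_lt_mul_iff_right₀ hs).2
                calc t * (s⁻¹ * ‖y‖) < s⁻¹ * (inner ℝ x y : ℝ) * 2 := by linarith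
                  _ = (inner ℝ x y : ℝ) * s⁻¹ * 2 := by ring
            _ = (inner ℝ x y : ℝ) * 2 := by field_simp
        · calc ‖y‖ = s * (s⁻¹ * ‖y‖) := by field_simp
            _ < s * 1 := (mul_lt_mul_iff_right₀ hs).2 h2
            _ = s := mul_one s
    rw [hset, Measure.addHaar_smul, hdim, abs_of_pos (pow_pos hs n)]
  set kap : ℝ := (volume (K ∩ ball 0 1)).toReal with hkap
  have hκfin : volume (K ∩ ball (0 : EuclideanSpace ℝ (Fin n)) 1) ≠ ⊤ :=
    ((measure_mono inter_subset_right).trans_lt measure_ball_lt_top).ne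
  have hκpos : 0 < kap := by
    refine ENNReal.toReal_pos ?_ hκfin
    refine ((hKopen.inter isOpen_ball).measure_pos volume ⟨(2 * t)⁻¹ • x, ?_, ?_⟩).ne'
    · show t * ‖(2 * t)⁻¹ • x‖ / 2 < (inner ℝ x ((2 * t)⁻¹ • x) : ℝ)
      rw [norm_smul, Real.norm_eq_abs, abs_of_pos (by positivity), hxt,
        real_inner_smul_right, real_inner_self_eq_norm_sq, hxt]
      have e1 : (2*t)⁻¹ * t = 1/2 := by field_simp
      calc t * ((2*t)⁻¹ * t) / 2 = t/4 := by rw [e1]; ring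
        _ < t/2 := by linarith
        _ = (2*t)⁻¹ * t ^ 2 := by rw [show t^2 = t*t by ring, ← mul_assoc, e1]; ring
    · have e1 : (2*t)⁻¹ * t = 1/2 := by field_simp
      rw [mem_ball_zero_iff, norm_smul, Real.norm_eq_abs, abs_of_pos (by positivity), hxt, e1]
      norm_num
  set del : ℝ := t / 2 * kap * (1 - (1/2 : ℝ) ^ n) with hdel
  have hδpos : 0 < del := by
    have : (1/2 : ℝ) ^ n < 1 := pow_lt_one₀ (by norm_num) (by norm_num) hn.ne'
    have h1 : 0 < 1 - (1/2 : ℝ) ^ n := by linarith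
    positivity
  -- pointwise positivity on the ball
  have hball_pos : ∀ y ∈ ball x t, (0 : ℝ) ≤ (inner ℝ x (fker n y) : ℝ) := by
    intro y hy
    have hsq : ‖y - x‖ ^ 2 < t ^ 2 := by
      have := mem_ball_iff_norm.1 hy
      exact pow_lt_pow_left₀ this (norm_nonneg _) two_ne_zero
    have hexp : ‖y - x‖ ^ 2 = ‖y‖ ^ 2 - 2 * (inner ℝ y x : ℝ) + ‖x‖ ^ 2 :=
      norm_sub_sq_real y x
    have hin : 0 ≤ (inner ℝ x y : ℝ) := by
      rw [real_inner_comm]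
      nlinarith [sq_nonneg ‖y‖, hxt]
    rw [fker, real_inner_smul_right]
    exact mul_nonneg (Real.rpow_nonneg (norm_nonneg _) _) hin
  -- cone ∩ small ball sits inside the ball x t
  have hKsub_ball : ∀ ε : ℝ, ε ≤ t → K ∩ ball 0 ε ⊆ ball x t := by
    intro ε hεt y hy
    obtain ⟨hyK, hyb⟩ := hy
    have h1 : t * ‖y‖ / 2 < (inner ℝ x y : ℝ) := hyK
    have h2 : ‖y‖ < ε := mem_ball_zero_iff.1 hyb
    rw [mem_ball_iff_norm]
    have hexp : ‖y - x‖ ^ 2 = ‖y‖ ^ 2 - 2 * (inner ℝ y x : ℝ) + ‖x‖ ^ 2 :=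
      norm_sub_sq_real y x
    have hsq : ‖y - x‖ ^ 2 < t ^ 2 := by
      rw [hexp, hxt, real_inner_comm]
      nlinarith [norm_nonneg y]
    exact lt_of_pow_lt_pow_left₀ 2 ht.le hsq
  -- the key quantitative lower bound
  have key : ∀ ε : ℝ, 0 < ε → ε ≤ t →
      del ≤ (inner ℝ x (I (ε/2) - I ε) : ℝ) := by
    intro ε hε hεt
    have hε2 : 0 < ε / 2 := by linarith
    set A : Set (EuclideanSpace ℝ (Fin n)) := ball x t \ ball 0 ε with hA
    set D : Set (EuclideanSpace ℝ (Fin n)) := ball x t ∩ (ball 0 ε \ ball 0 (ε/2)) with hD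
    have hball_sub : ball x t ⊆ closedBall (0 : EuclideanSpace ℝ (Fin n)) (‖x‖ + t) := by
      intro y hy
      rw [mem_closedBall_zero_iff]
      have h1 := mem_ball_iff_norm.1 hy
      calc ‖y‖ = ‖x + (y - x)‖ := by rw [add_sub_cancel]
        _ ≤ ‖x‖ + ‖y - x‖ := norm_add_le _ _
        _ ≤ ‖x‖ + t := by linarith
    have hsplit : ball x t \ ball 0 (ε/2) = A ∪ D := by
      ext y
      simp only [hA, hD, mem_diff, mem_union, mem_inter_iff, mem_ball_zero_iff, not_lt]
      constructor
      · rintro ⟨h1, h2⟩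
        by_cases h3 : ε ≤ ‖y‖
        · exact Or.inl ⟨h1, h3⟩
        · exact Or.inr ⟨h1, lt_of_not_ge h3, h2⟩
      · rintro (⟨h1, h2⟩ | ⟨h1, h2, h3⟩)
        · exact ⟨h1, by linarith⟩
        · exact ⟨h1, h3⟩
    have hdisj : Disjoint A D := by
      rw [Set.disjoint_left]
      rintro y ⟨hy1, hy2⟩ ⟨hy3, hy4, hy5⟩
      exact hy2 hy4
    have hAm : MeasurableSet A := measurableSet_ball.diff measurableSet_ball
    have hDm : MeasurableSet D :=
      measurableSet_ball.inter (measurableSet_ball.diff measurableSet_ball)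
    have hintA : IntegrableOn (fker n) A volume :=
      integrableOn_fker' n hε (fun y hy => ⟨hball_sub hy.1, hy.2⟩)
    have hintD : IntegrableOn (fker n) D volume := by
      refine integrableOn_fker' n hε2 (fun y hy => ⟨hball_sub hy.1, hy.2.2⟩)
    have hIdiff : ∫ y in D, fker n y = I (ε/2) - I ε := by
      have h1 : I (ε/2) = ∫ y in A ∪ D, fker n y := by rw [hI]; simp only; rw [hsplit]
      rw [h1, setIntegral_union hdisj hDm hintA hintD]
      simp [hI, hA]
    set g : EuclideanSpace ℝ (Fin n) → ℝ := fun y => (inner ℝ x (fker n y) : ℝ) with hg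
    have hintDg : IntegrableOn g D volume :=
      ContinuousLinearMap.integrable_comp (innerSL ℝ x) hintD
    have hinnerI : (inner ℝ x (∫ y in D, fker n y) : ℝ) = ∫ y in D, g y :=
      (integral_inner hintD x).symm
    set Kε : Set (EuclideanSpace ℝ (Fin n)) := K ∩ (ball 0 ε \ ball 0 (ε/2)) with hKε
    have hKεm : MeasurableSet Kε :=
      hKopen.measurableSet.inter (measurableSet_ball.diff measurableSet_ball)
    have hKεsub : Kε ⊆ D := by
      rintro y ⟨hyK, hyann⟩
      exact ⟨hKsub_ball ε hεt ⟨hyK, hyann.1⟩, hyann⟩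
    have hmono : ∫ y in Kε, g y ≤ ∫ y in D, g y := by
      refine setIntegral_mono_set hintDg ?_ (HasSubset.Subset.eventuallyLE hKεsub)
      exact (ae_restrict_iff' hDm).2 (Filter.Eventually.of_forall fun y hy => hball_pos y hy.1)
    have hconst : ∀ y ∈ Kε, t / 2 * ε ^ (-(n:ℝ)) ≤ g y := by
      rintro y ⟨hyK, hy1, hy2⟩
      have h2 : ‖y‖ < ε := mem_ball_zero_iff.1 hy1
      have h3 : ε / 2 ≤ ‖y‖ := by
        simpa [mem_ball_zero_iff, not_lt] using hy2
      have hy0 : (0:ℝ) < ‖y‖ := lt_of_lt_of_le hε2 h3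
      have hKy : t * ‖y‖ / 2 < (inner ℝ x y : ℝ) := hyK
      have h4 : ε ^ (-(n:ℝ)) ≤ ‖y‖ ^ (-(n:ℝ)) :=
        Real.rpow_le_rpow_of_nonpos hy0 h2.le (neg_nonpos.2 (Nat.cast_nonneg n))
      have h5 : g y = ‖y‖ ^ (-((n:ℝ)+1)) * (inner ℝ x y : ℝ) := by
        simp only [hg, fker, real_inner_smul_right]
      calc t / 2 * ε ^ (-(n:ℝ)) ≤ t / 2 * ‖y‖ ^ (-(n:ℝ)) :=
            mul_le_mul_of_nonneg_left h4 (by positivity)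
        _ = ‖y‖ ^ (-((n:ℝ)+1)) * (t * ‖y‖ / 2) := by
            rw [← rpow_succ_mul hy0 n]; ring
        _ ≤ ‖y‖ ^ (-((n:ℝ)+1)) * (inner ℝ x y : ℝ) :=
            mul_le_mul_of_nonneg_left hKy.le (Real.rpow_nonneg (norm_nonneg _) _)
        _ = g y := h5.symm
    have hKεfin : volume Kε ≠ ⊤ :=
      ((measure_mono (show Kε ⊆ ball (0 : EuclideanSpace ℝ (Fin n)) ε from
        fun y hy => hy.2.1)).trans_lt measure_ball_lt_top).ne
    have hge : t / 2 * ε ^ (-(n:ℝ)) * (volume Kε).toReal ≤ ∫ y in Kε, g y :=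
      by have := setIntegral_ge_of_const_le hKεm hKεfin hconst (hintDg.mono_set hKεsub)
         rw [smul_eq_mul, measureReal_def] at this; linarith
    have hvol : (volume Kε).toReal = kap * (ε ^ n - (ε/2) ^ n) := by
      have hset : Kε = (K ∩ ball 0 ε) \ (K ∩ ball 0 (ε/2)) := inter_diff_distrib_left _ _ _
      have hsub2 : K ∩ ball 0 (ε/2) ⊆ K ∩ ball 0 ε :=
        inter_subset_inter_right _ (ball_subset_ball (by linarith))
      have hfin2 : volume (K ∩ ball (0 : EuclideanSpace ℝ (Fin n)) (ε/2)) ≠ ⊤ :=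
        ((measure_mono inter_subset_right).trans_lt measure_ball_lt_top).ne
      rw [hset, measure_diff hsub2
          (hKopen.measurableSet.inter measurableSet_ball).nullMeasurableSet hfin2,
        hscale ε hε, hscale (ε/2) hε2,
        ENNReal.toReal_sub_of_le
          (mul_le_mul_left (ENNReal.ofReal_le_ofReal
            (pow_le_pow_left₀ hε2.le (by linarith) n)) _)
          (ENNReal.mul_ne_top ENNReal.ofReal_ne_top hκfin),
        ENNReal.toReal_mul, ENNReal.toReal_mul,
        ENNReal.toReal_ofReal (by positivity), ENNReal.toReal_ofReal (by positivity)]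
      ring
    have harith : t / 2 * ε ^ (-(n:ℝ)) * (kap * (ε ^ n - (ε/2) ^ n)) = del := by
      have h2' : ((ε/2:ℝ)) ^ n = ε ^ n * (1/2:ℝ) ^ n := by
        rw [div_pow, div_pow, one_pow]; ring
      have h3' : ε ^ (-(n:ℝ)) * ε ^ n = 1 := by
        rw [← Real.rpow_natCast ε n, ← Real.rpow_add hε]
        simp
      calc t / 2 * ε ^ (-(n:ℝ)) * (kap * (ε ^ n - (ε/2) ^ n))
          = (ε ^ (-(n:ℝ)) * ε ^ n) * (t/2 * kap * (1 - (1/2:ℝ) ^ n)) := by rw [h2']; ring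
        _ = del := by rw [h3', hdel]; ring
    rw [← hIdiff, hinnerI]
    have h6 : del = t / 2 * ε ^ (-(n:ℝ)) * (volume Kε).toReal := by rw [hvol, harith]
    linarith [hge, hmono]
  have hhalf : Filter.Tendsto (fun ε : ℝ => ε / 2) (𝓝[>] (0:ℝ)) (𝓝[>] (0:ℝ)) := by
    rw [tendsto_nhdsWithin_iff]
    constructor
    · have h7 : Filter.Tendsto (fun ε : ℝ => ε / 2) (𝓝 0) (𝓝 0) := by
        simpa using (continuous_id.div_const 2).tendsto (0:ℝ)
      exact h7.mono_left nhdsWithin_le_nhds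
    · filter_upwards [self_mem_nhdsWithin] with ε hε
      exact mem_Ioi.2 (half_pos (mem_Ioi.1 hε))
  have hL2 : Filter.Tendsto (fun ε : ℝ => I (ε/2)) (𝓝[>] (0:ℝ)) (𝓝 L) := hL.comp hhalf
  have hdiffL : Filter.Tendsto (fun ε : ℝ => I (ε/2) - I ε) (𝓝[>] (0:ℝ)) (𝓝 0) := by
    simpa using hL2.sub hL
  have htend : Filter.Tendsto (fun ε : ℝ => (inner ℝ x (I (ε/2) - I ε) : ℝ))
      (𝓝[>] (0:ℝ)) (𝓝 0) := by
    have h8 : Filter.Tendsto (fun ε : ℝ => (innerSL ℝ x) (I (ε/2) - I ε)) (𝓝[>] (0:ℝ))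
        (𝓝 ((innerSL ℝ x) 0)) :=
      ((innerSL ℝ x).continuous.tendsto _).comp hdiffL
    rw [map_zero] at h8
    simp only [innerSL_apply_apply] at h8
    exact h8
  have hev : ∀ᶠ ε in 𝓝[>] (0:ℝ), del ≤ (inner ℝ x (I (ε/2) - I ε) : ℝ) := by
    filter_upwards [Ioc_mem_nhdsGT_of_mem ⟨le_rfl, ht⟩] with ε hε
    exact key ε hε.1 hε.2
  have hcontra : del ≤ 0 := ge_of_tendsto htend hev
  linarith

set_option maxHeartbeats 1000000 in
theorem stmt_1 (n : ℕ) (hn : 0 < n) :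
    ∃ C : ℝ, 0 < C ∧ ∀ (x : EuclideanSpace ℝ (Fin n)) (t : ℝ), 0 < t →
      ∀ L : EuclideanSpace ℝ (Fin n),
        Filter.Tendsto
          (fun ε : ℝ => ∫ y in Metric.ball x t \ Metric.ball 0 ε,
            (‖y‖ ^ (-((n : ℝ) + 1))) • y)
          (𝓝[>] 0) (𝓝 L) →
        ‖L‖ ≤ C * Real.log ((‖x‖ + t) / |‖x‖ - t|) := by
  haveI : Nonempty (Fin n) := ⟨⟨0, hn⟩⟩
  set volB := (volume (ball (0 : EuclideanSpace ℝ (Fin n)) 1)).toReal with hvolB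
  have hvolBpos : 0 < volB :=
    ENNReal.toReal_pos (measure_ball_pos volume 0 one_pos).ne' measure_ball_lt_top.ne
  have hCpos : (0:ℝ) < n * volB := by positivity
  refine ⟨n * volB, hCpos, ?_⟩
  intro x t ht L hL
  have hL' : Filter.Tendsto (fun ε : ℝ => ∫ y in ball x t \ ball 0 ε, fker n y)
      (𝓝[>] 0) (𝓝 L) := hL
  set a := |‖x‖ - t| with ha
  set b := ‖x‖ + t with hb
  have hab : a ≤ b := by
    rw [ha, hb]
    rcases abs_cases (‖x‖ - t) with ⟨h1, _⟩ | ⟨h1, _⟩ <;> rw [h1] <;>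
      nlinarith [norm_nonneg x, ht]
  -- generic bound for sets inside the shell
  have bound : ∀ s : Set (EuclideanSpace ℝ (Fin n)), 0 < a →
      s ⊆ closedBall 0 b \ ball 0 a →
      ‖∫ y in s, fker n y‖ ≤ n * volB * Real.log (b / a) := by
    intro s hapos hsub
    calc ‖∫ y in s, fker n y‖ ≤ ∫ y in s, ‖fker n y‖ := norm_integral_le_integral_norm _
      _ ≤ ∫ y in closedBall (0 : EuclideanSpace ℝ (Fin n)) b \ ball 0 a, ‖fker n y‖ := by
          refine setIntegral_mono_set (integrableOn_fker n hapos).norm ?_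
            (HasSubset.Subset.eventuallyLE hsub)
          exact Filter.Eventually.of_forall fun y => norm_nonneg _
      _ = n * volB * Real.log (b / a) := shell_integral n hn hapos hab
  have hball_b : ball x t ⊆ closedBall (0 : EuclideanSpace ℝ (Fin n)) b := by
    intro y hy
    rw [mem_closedBall_zero_iff, hb]
    have h1 := mem_ball_iff_norm.1 hy
    calc ‖y‖ = ‖x + (y - x)‖ := by rw [add_sub_cancel]
      _ ≤ ‖x‖ + ‖y - x‖ := norm_add_le _ _
      _ ≤ ‖x‖ + t := by linarith
  rcases lt_trichotomy ‖x‖ t with hx | hx | hx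
  · -- 0 is inside the ball
    have ha' : a = t - ‖x‖ := by rw [ha, abs_of_neg (by linarith)]; ring
    have hapos : 0 < a := by rw [ha']; linarith
    have hsub0 : ball (0 : EuclideanSpace ℝ (Fin n)) a ⊆ ball x t := by
      intro y hy
      rw [mem_ball_iff_norm]
      have h1 := mem_ball_zero_iff.1 hy
      calc ‖y - x‖ ≤ ‖y‖ + ‖x‖ := norm_sub_le _ _
        _ < a + ‖x‖ := by linarith
        _ = t := by rw [ha']; ring
    set J := ∫ y in ball x t \ ball 0 a, fker n y with hJ
    have hkey : ∀ ε ∈ Ioo (0:ℝ) a, (∫ y in ball x t \ ball 0 ε, fker n y) = J := by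
      intro ε hε
      have hsplit : ball x t \ ball 0 ε =
          (ball (0 : EuclideanSpace ℝ (Fin n)) a \ ball 0 ε) ∪ (ball x t \ ball 0 a) := by
        ext y
        simp only [mem_diff, mem_union, mem_ball_zero_iff, not_lt]
        constructor
        · rintro ⟨h1, h2⟩
          by_cases h3 : ‖y‖ < a
          · exact Or.inl ⟨h3, h2⟩
          · exact Or.inr ⟨h1, not_lt.1 h3⟩
        · rintro (⟨h1, h2⟩ | ⟨h1, h2⟩)
          · exact ⟨hsub0 (mem_ball_zero_iff.2 h1), h2⟩
          · exact ⟨h1, le_trans (le_of_lt hε.2) h2⟩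
      have hdisj2 : Disjoint (ball (0 : EuclideanSpace ℝ (Fin n)) a \ ball 0 ε)
          (ball x t \ ball 0 a) := by
        rw [Set.disjoint_left]
        rintro y ⟨hy1, _⟩ ⟨_, hy4⟩
        exact hy4 hy1
      have hint1 : IntegrableOn (fker n) (ball (0 : EuclideanSpace ℝ (Fin n)) a \ ball 0 ε) :=
        integrableOn_fker' n hε.1 (fun y hy =>
          ⟨(ball_subset_closedBall.trans (closedBall_subset_closedBall hab)) hy.1, hy.2⟩)
      have hint2 : IntegrableOn (fker n) (ball x t \ ball 0 a) :=
        integrableOn_fker' n hapos (fun y hy => ⟨hball_b hy.1, hy.2⟩)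
      have hsymm : ∫ y in ball (0 : EuclideanSpace ℝ (Fin n)) a \ ball 0 ε, fker n y = 0 := by
        refine integral_fker_symm n (measurableSet_ball.diff measurableSet_ball) ?_ hint1
        intro y
        simp [mem_ball_zero_iff]
      rw [hsplit, setIntegral_union hdisj2 (measurableSet_ball.diff measurableSet_ball)
        hint1 hint2, hsymm, zero_add]
    have hJt : Filter.Tendsto (fun ε : ℝ => ∫ y in ball x t \ ball 0 ε, fker n y)
        (𝓝[>] 0) (𝓝 J) := by
      refine Filter.Tendsto.congr' ?_ tendsto_const_nhds
      filter_upwards [Ioo_mem_nhdsGT_of_mem ⟨le_rfl, hapos⟩] with ε hε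
      exact (hkey ε hε).symm
    have hLJ : L = J := tendsto_nhds_unique hL' hJt
    rw [hLJ, hJ]
    exact bound _ hapos (fun y hy => ⟨hball_b hy.1, hy.2⟩)
  · exact absurd hL' (fun h => caseA n hn x t ht hx L h)
  · -- 0 is outside the ball
    have ha' : a = ‖x‖ - t := by rw [ha, abs_of_pos (by linarith)]
    have hapos : 0 < a := by rw [ha']; linarith
    have houtside : ∀ y ∈ ball x t, a < ‖y‖ := by
      intro y hy
      have h1 := mem_ball_iff_norm.1 hy
      have h2 : ‖x‖ - ‖y‖ ≤ ‖y - x‖ := by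
        rw [norm_sub_rev]; exact norm_sub_norm_le _ _
      rw [ha']; linarith
    have hkey : ∀ ε ∈ Ioo (0:ℝ) a, ball x t \ ball 0 ε = ball x t := by
      intro ε hε
      ext y
      simp only [mem_diff, mem_ball_zero_iff, not_lt]
      constructor
      · exact fun h => h.1
      · intro h
        exact ⟨h, le_trans hε.2.le (houtside y h).le⟩
    set J := ∫ y in ball x t, fker n y with hJ
    have hJt : Filter.Tendsto (fun ε : ℝ => ∫ y in ball x t \ ball 0 ε, fker n y)
        (𝓝[>] 0) (𝓝 J) := by
      refine Filter.Tendsto.congr' ?_ tendsto_const_nhds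
      filter_upwards [Ioo_mem_nhdsGT_of_mem ⟨le_rfl, hapos⟩] with ε hε
      rw [hkey ε hε]
    have hLJ : L = J := tendsto_nhds_unique hL' hJt
    rw [hLJ, hJ]
    exact bound _ hapos (fun y hy =>
      ⟨hball_b hy, fun hc => absurd (mem_ball_zero_iff.1 hc) (not_lt.2 (houtside y hy).le)⟩)
end

section
/- Let n ≥ 3 and I(x) = |x|^{1−n} on ℝⁿ. Define K_t(x) = (1/|B(x,t)|)∫_{B(x,t)} I(y) dy − I(x). If x, y ∈ ℝⁿ satisfy |x| ≥ 2|y| and 0 < t < |x|/3, then |K_t(x−y) − K_t(x)| ≤ C·|y|·t²·|x|^{−n−2}, with C depending only on n. -/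
open MeasureTheory

/-- `K_t(x) = ⨍_{B(x,t)} |y|^{1-n} dy - |x|^{1-n}`. -/
noncomputable def rieszK (n : ℕ) (t : ℝ) (x : EuclideanSpace ℝ (Fin n)) : ℝ :=
  (⨍ y in Metric.ball x t, ‖y‖ ^ ((1 : ℝ) - n)) - ‖x‖ ^ ((1 : ℝ) - n)

open Metric Set

variable {E : Type*} [NormedAddCommGroup E] [InnerProductSpace ℝ E]

noncomputable def fI (p : ℝ) (w : E) : ℝ := ‖w‖ ^ p

lemma contDiffAt_fI (p : ℝ) {w : E} (hw : w ≠ 0) {m : ℕ∞} :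
    ContDiffAt ℝ m (fI p : E → ℝ) w :=
  (Real.contDiffAt_rpow_const_of_ne (norm_ne_zero_iff.2 hw)).comp w (contDiffAt_norm ℝ hw)

lemma contDiffOn_fI (p : ℝ) {m : ℕ∞} :
    ContDiffOn ℝ m (fI p : E → ℝ) {w : E | w ≠ 0} :=
  fun w hw => (contDiffAt_fI p hw).contDiffWithinAt

lemma fI_homog (p : ℝ) [FiniteDimensional ℝ E] {i : ℕ} {M : ℝ}
    (hM : ∀ u : E, ‖u‖ = 1 → ‖iteratedFDeriv ℝ i (fI p) u‖ ≤ M)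
    {w : E} (hw : w ≠ 0) :
    ‖iteratedFDeriv ℝ i (fI p) w‖ ≤ M * ‖w‖ ^ (p - i) := by
  set c : ℝ := ‖w‖ with hc_def
  have hc : 0 < c := norm_pos_iff.2 hw
  set u : E := c⁻¹ • w with hu_def
  have hu : ‖u‖ = 1 := by
    rw [hu_def, norm_smul, norm_inv, Real.norm_eq_abs, abs_of_pos hc, ← hc_def]
    field_simp
  have hu0 : u ≠ 0 := by
    intro h; rw [h] at hu; simp at hu
  -- scaling equivalence
  let h : E ≃L[ℝ] E :=
    (LinearEquiv.smulOfNeZero ℝ E c⁻¹ (by positivity)).toContinuousLinearEquiv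
  have h_apply : ∀ v : E, h v = c⁻¹ • v := fun v => rfl
  have hset : (h ⁻¹' {w : E | w ≠ 0}) = {w : E | w ≠ 0} := by
    ext v
    simp only [Set.mem_preimage, Set.mem_setOf_eq]
    rw [h_apply]
    simp [smul_ne_zero_iff, inv_ne_zero hc.ne']
  have hopen : IsOpen {w : E | w ≠ 0} := isOpen_ne
  have hs : UniqueDiffOn ℝ {w : E | w ≠ 0} := hopen.uniqueDiffOn
  have hw_mem : w ∈ {w : E | w ≠ 0} := hw
  have hu_mem : u ∈ {w : E | w ≠ 0} := hu0
  have hhw : h w = u := by rw [h_apply]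
  -- composition identity
  have comp_eq : (fI p : E → ℝ) ∘ h = (c⁻¹) ^ p • (fI p : E → ℝ) := by
    funext v
    simp only [Function.comp_apply, fI, h_apply, norm_smul, norm_inv, Real.norm_eq_abs,
      abs_of_pos hc, smul_eq_mul]
    rw [Real.mul_rpow (by positivity) (norm_nonneg v)]
    rfl
  have key := h.iteratedFDerivWithin_comp_right (fI p : E → ℝ) hs (by rw [hhw]; exact hu_mem) i
  rw [hset, comp_eq] at key
  have smul_eq : iteratedFDerivWithin ℝ i ((c⁻¹) ^ p • (fI p : E → ℝ)) {w : E | w ≠ 0} w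
      = (c⁻¹) ^ p • iteratedFDerivWithin ℝ i (fI p) {w : E | w ≠ 0} w :=
    iteratedFDerivWithin_const_smul_apply ((contDiffOn_fI p (m := i)) w hw_mem) hs hw_mem
  rw [smul_eq] at key
  -- pass to global derivatives
  rw [iteratedFDerivWithin_of_isOpen i hopen hw_mem] at key
  rw [hhw, iteratedFDerivWithin_of_isOpen i hopen hu_mem] at key
  -- take norms
  have hnorm := congrArg norm key
  rw [norm_smul (c⁻¹ ^ p) (iteratedFDeriv ℝ i (fI p) w), Real.norm_eq_abs,
    abs_of_pos (Real.rpow_pos_of_pos (by positivity) p)] at hnorm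
  have hhnorm : ‖(h : E →L[ℝ] E)‖ ≤ c⁻¹ := by
    apply ContinuousLinearMap.opNorm_le_bound _ (by positivity)
    intro v
    rw [show (h : E →L[ℝ] E) v = c⁻¹ • v from rfl, norm_smul, norm_inv, Real.norm_eq_abs,
      abs_of_pos hc]
  have hcomp : ‖(iteratedFDeriv ℝ i (fI p) u).compContinuousLinearMap fun _ => (h : E →L[ℝ] E)‖
      ≤ M * (c⁻¹) ^ (i : ℕ) := by
    refine le_trans (ContinuousMultilinearMap.norm_compContinuousLinearMap_le _ _) ?_
    have h1 : ‖iteratedFDeriv ℝ i (fI p) u‖ ≤ M := hM u hu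
    have h2 : (∏ _j : Fin i, ‖(h : E →L[ℝ] E)‖) ≤ (c⁻¹) ^ (i : ℕ) := by
      rw [Finset.prod_const, Finset.card_univ, Fintype.card_fin]
      exact pow_le_pow_left₀ (norm_nonneg _) hhnorm i
    exact mul_le_mul h1 h2 (Finset.prod_nonneg fun _ _ => norm_nonneg _) (le_trans (norm_nonneg _) h1)
  have hM0 : 0 ≤ M := le_trans (norm_nonneg _) (hM u hu)
  have hipow : (c⁻¹ : ℝ) ^ (i : ℕ) = c ^ (-(i:ℝ)) := by
    rw [← Real.rpow_natCast c⁻¹ i, Real.inv_rpow hc.le, ← Real.rpow_neg hc.le]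
  have hD : ‖iteratedFDeriv ℝ i (fI p) w‖ = c ^ p *
      ‖(iteratedFDeriv ℝ i (fI p) u).compContinuousLinearMap fun _ => (h : E →L[ℝ] E)‖ := by
    rw [← hnorm, Real.inv_rpow hc.le]
    have := (Real.rpow_pos_of_pos hc p).ne'
    field_simp
  calc ‖iteratedFDeriv ℝ i (fI p) w‖
      = c ^ p * ‖(iteratedFDeriv ℝ i (fI p) u).compContinuousLinearMap
          fun _ => (h : E →L[ℝ] E)‖ := hD
    _ ≤ c ^ p * (M * (c⁻¹) ^ (i : ℕ)) := by
        have := (Real.rpow_pos_of_pos hc p).le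
        gcongr
    _ = M * (c ^ p * c ^ (-(i:ℝ))) := by rw [hipow]; ring
    _ = M * c ^ (p - (i:ℝ)) := by rw [← Real.rpow_add hc, ← sub_eq_add_neg]

noncomputable instance instNACG_CLM2 : NormedAddCommGroup (E →L[ℝ] E →L[ℝ] ℝ) := inferInstance

noncomputable instance instNS_CLM2 : NormedSpace ℝ (E →L[ℝ] E →L[ℝ] ℝ) := inferInstance

lemma norm_fderiv3_eq (f : E → ℝ) (w : E) :
    ‖fderiv ℝ (fderiv ℝ (fderiv ℝ f)) w‖ = ‖iteratedFDeriv ℝ 3 f w‖ := by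
  calc ‖fderiv ℝ (fderiv ℝ (fderiv ℝ f)) w‖
      = ‖iteratedFDeriv ℝ 0 (fderiv ℝ (fderiv ℝ (fderiv ℝ f))) w‖ := by
        rw [norm_iteratedFDeriv_zero]
    _ = ‖iteratedFDeriv ℝ 1 (fderiv ℝ (fderiv ℝ f)) w‖ := norm_iteratedFDeriv_fderiv
    _ = ‖iteratedFDeriv ℝ 2 (fderiv ℝ f) w‖ := norm_iteratedFDeriv_fderiv
    _ = ‖iteratedFDeriv ℝ 3 f w‖ := norm_iteratedFDeriv_fderiv

lemma exists_D3_bound (p : ℝ) [FiniteDimensional ℝ E] :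
    ∃ M : ℝ, 0 < M ∧ ∀ w : E, w ≠ 0 →
      ‖fderiv ℝ (fderiv ℝ (fderiv ℝ (fI p : E → ℝ))) w‖ ≤ M * ‖w‖ ^ (p - 3) := by
  have hopen : IsOpen {w : E | w ≠ 0} := isOpen_ne
  have hs : UniqueDiffOn ℝ {w : E | w ≠ 0} := hopen.uniqueDiffOn
  have hcont : ContinuousOn (iteratedFDeriv ℝ 3 (fI p : E → ℝ)) {w : E | w ≠ 0} := by
    have h1 := (contDiffOn_fI (E := E) p (m := 3)).continuousOn_iteratedFDerivWithin
      (le_refl _) hs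
    exact h1.congr (iteratedFDerivWithin_of_isOpen 3 hopen).symm
  have hsub : Metric.sphere (0:E) 1 ⊆ {w : E | w ≠ 0} := fun u hu => by
    simp only [Set.mem_setOf_eq]
    intro h0
    rw [mem_sphere_zero_iff_norm] at hu
    rw [h0] at hu; simp at hu
  obtain ⟨M₀, hM₀⟩ := (isCompact_sphere (0:E) 1).exists_bound_of_continuousOn
    (hcont.mono hsub)
  refine ⟨max M₀ 1, lt_of_lt_of_le one_pos (le_max_right _ _), fun w hw => ?_⟩
  rw [norm_fderiv3_eq]
  have := fI_homog (E := E) p (i := 3) (M := max M₀ 1)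
    (fun u hu => le_trans (hM₀ u (by rwa [mem_sphere_zero_iff_norm])) (le_max_left _ _)) hw
  simpa using this

lemma fI_diff0 (p : ℝ) {w : E} (hw : w ≠ 0) : DifferentiableAt ℝ (fI p : E → ℝ) w :=
  (contDiffAt_fI p hw (m := 1)).differentiableAt (by simp)

lemma fI_diff1 (p : ℝ) {w : E} (hw : w ≠ 0) :
    DifferentiableAt ℝ (fderiv ℝ (fI p : E → ℝ)) w :=
  ((contDiffAt_fI p hw (m := 2)).fderiv_right (m := 1) (by norm_num)).differentiableAt (by simp)

lemma fI_diff2 (p : ℝ) {w : E} (hw : w ≠ 0) :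
    DifferentiableAt ℝ (fderiv ℝ (fderiv ℝ (fI p : E → ℝ))) w :=
  (((contDiffAt_fI p hw (m := 3)).fderiv_right (m := 2) (by norm_num)).fderiv_right (m := 1)
    (by norm_num)).differentiableAt (by simp)

section Integration

variable [MeasurableSpace E] [BorelSpace E] [FiniteDimensional ℝ E]
  (μ : Measure E) [μ.IsAddHaarMeasure]

lemma setIntegral_ball_sub (f : E → ℝ) (x y : E) (t : ℝ) :
    ∫ z in ball x t, f (z - y) ∂μ = ∫ u in ball (x - y) t, f u ∂μ := by
  rw [← integral_indicator measurableSet_ball, ← integral_indicator measurableSet_ball]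
  have key : ∀ z : E, (ball x t).indicator (fun w => f (w - y)) z
      = (ball (x - y) t).indicator f (z - y) := by
    intro z
    by_cases hz : z ∈ ball x t
    · rw [Set.indicator_of_mem hz, Set.indicator_of_mem]
      rw [mem_ball] at hz ⊢
      rwa [dist_sub_right]
    · rw [Set.indicator_of_notMem hz, Set.indicator_of_notMem]
      intro hmem
      apply hz
      rw [mem_ball] at hmem ⊢
      rwa [dist_sub_right] at hmem
    
  simp_rw [key]
  exact integral_sub_right_eq_self ((ball (x - y) t).indicator f) y

lemma setIntegral_ball_clm_zero (t : ℝ) (φ : E →L[ℝ] ℝ) :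
    ∫ z in ball (0:E) t, φ z ∂μ = 0 := by
  have h1 : ∫ z in ball (0:E) t, φ z ∂μ
      = ∫ z, (ball (0:E) t).indicator (fun z => φ z) z ∂μ :=
    (integral_indicator measurableSet_ball).symm
  have h2 : ∫ z, (ball (0:E) t).indicator (fun z => φ z) z ∂μ
      = ∫ z, (ball (0:E) t).indicator (fun z => φ z) (-z) ∂μ :=
    (integral_neg_eq_self _ μ).symm
  have h3 : ∀ z : E, (ball (0:E) t).indicator (fun z => φ z) (-z)
      = - (ball (0:E) t).indicator (fun z => φ z) z := by
    intro z
    by_cases hz : z ∈ ball (0:E) t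
    · have hz' : -z ∈ ball (0:E) t := by
        rwa [mem_ball_zero_iff, norm_neg, ← mem_ball_zero_iff]
      rw [Set.indicator_of_mem hz, Set.indicator_of_mem hz']
      simp
    · have hz' : -z ∉ ball (0:E) t := by
        intro hmem
        apply hz
        rwa [mem_ball_zero_iff, norm_neg, ← mem_ball_zero_iff] at hmem
      rw [Set.indicator_of_notMem hz, Set.indicator_of_notMem hz']
      simp
  have key : ∫ z in ball (0:E) t, φ z ∂μ = - ∫ z in ball (0:E) t, φ z ∂μ := by
    nth_rewrite 1 [h1, h2]
    simp_rw [h3]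
    rw [integral_neg, ← h1]
  linarith [key]

lemma abs_average_sub_le {x : E} {t L : ℝ} (ht : 0 < t) (G : E → ℝ) (H : E → (E →L[ℝ] ℝ))
    (hG : ∀ z ∈ closedBall x t, HasFDerivAt G (H z) z)
    (hH : ∀ z ∈ closedBall x t, ‖H z - H x‖ ≤ L * t) :
    |(⨍ z in ball x t, G z ∂μ) - G x| ≤ L * t ^ 2 := by
  have hLt : 0 ≤ L * t := le_trans (norm_nonneg (H x - H x)) (hH x (mem_closedBall_self ht.le))
  have hxmem : x ∈ closedBall x t := mem_closedBall_self ht.le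
  -- Taylor remainder bound
  have taylor : ∀ z ∈ closedBall x t, |G z - G x - (H x) (z - x)| ≤ (L * t) * t := by
    intro z hz
    have h1 : ‖G z - G x - (H x) (z - x)‖ ≤ (L * t) * ‖z - x‖ :=
      (convex_closedBall x t).norm_image_sub_le_of_norm_hasFDerivWithin_le'
        (fun w hw => (hG w hw).hasFDerivWithinAt) hH hxmem hz
    refine le_trans h1 ?_
    have : ‖z - x‖ ≤ t := by rwa [← dist_eq_norm, ← mem_closedBall]
    exact mul_le_mul_of_nonneg_left this hLt
  -- continuity and integrability
  have hGcont : ContinuousOn G (closedBall x t) :=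
    fun z hz => ((hG z hz).differentiableAt).continuousAt.continuousWithinAt
  have hGint : IntegrableOn G (ball x t) μ :=
    (hGcont.integrableOn_compact (isCompact_closedBall x t)).mono_set ball_subset_closedBall
  have hμball : μ (ball x t) < ⊤ := measure_ball_lt_top
  have hμball0 : μ (ball x t) ≠ 0 := (measure_ball_pos μ x ht).ne'
  set V : ℝ := (μ (ball x t)).toReal with hV_def
  have hV : 0 < V := ENNReal.toReal_pos hμball0 hμball.ne
  set ψ : E → ℝ := fun z => G z - G x - (H x) (z - x) with hψ_def
  have hψcont : ContinuousOn ψ (closedBall x t) := by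
    apply ContinuousOn.sub (hGcont.sub continuousOn_const)
    exact ((H x).continuous.comp (continuous_id.sub continuous_const)).continuousOn
  have hψint : IntegrableOn ψ (ball x t) μ :=
    (hψcont.integrableOn_compact (isCompact_closedBall x t)).mono_set ball_subset_closedBall
  have hlinint : IntegrableOn (fun z => (H x) (z - x)) (ball x t) μ :=
    (((H x).continuous.comp (continuous_id.sub continuous_const)).continuousOn.integrableOn_compact
      (isCompact_closedBall x t)).mono_set ball_subset_closedBall
  have hlin0 : ∫ z in ball x t, (H x) (z - x) ∂μ = 0 := by
    rw [setIntegral_ball_sub μ (fun u => (H x) u) x x t, sub_self]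
    exact setIntegral_ball_clm_zero μ t (H x)
  -- decompose integral
  have hdecomp : ∫ z in ball x t, G z ∂μ = (∫ z in ball x t, ψ z ∂μ) + V * G x := by
    have : ∀ z : E, G z = ψ z + ((H x) (z - x) + G x) := fun z => by simp [hψ_def]; ring
    have hconst : IntegrableOn (fun _ : E => G x) (ball x t) μ :=
      integrableOn_const hμball.ne
    have hsum : IntegrableOn (fun z => (H x) (z - x) + G x) (ball x t) μ :=
      hlinint.add hconst
    rw [integral_congr_ae (Filter.Eventually.of_forall fun z => this z)]
    rw [integral_add hψint hsum, integral_add hlinint hconst, hlin0, setIntegral_const]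
    simp [smul_eq_mul]; exact Or.inl rfl
  -- bound on remainder integral
  have hψbound : |∫ z in ball x t, ψ z ∂μ| ≤ (L * t * t) * V := by
    rw [← Real.norm_eq_abs]
    exact norm_setIntegral_le_of_norm_le_const hμball
      (fun z hz => taylor z (ball_subset_closedBall hz))
  -- conclude
  have havg : ⨍ z in ball x t, G z ∂μ = V⁻¹ * ∫ z in ball x t, G z ∂μ := by
    rw [setAverage_eq]; simp [hV_def, smul_eq_mul]; exact Or.inl rfl
  rw [havg, hdecomp]
  have : V⁻¹ * ((∫ z in ball x t, ψ z ∂μ) + V * G x) - G x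
      = V⁻¹ * ∫ z in ball x t, ψ z ∂μ := by
    field_simp
    ring
  rw [this, abs_mul, abs_of_pos (inv_pos.2 hV)]
  calc V⁻¹ * |∫ z in ball x t, ψ z ∂μ| ≤ V⁻¹ * ((L * t * t) * V) := by
        exact mul_le_mul_of_nonneg_left hψbound (inv_pos.2 hV).le
    _ = L * t ^ 2 := by field_simp

end Integration

theorem stmt_10 (n : ℕ) (hn : 3 ≤ n) :
    ∃ C : ℝ, 0 < C ∧ ∀ (x y : EuclideanSpace ℝ (Fin n)) (t : ℝ),
      2 * ‖y‖ ≤ ‖x‖ → 0 < t → t < ‖x‖ / 3 →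
      |rieszK n t (x - y) - rieszK n t x| ≤
        C * ‖y‖ * t ^ 2 * ‖x‖ ^ (-(n : ℝ) - 2) := by
  classical
  set E := EuclideanSpace ℝ (Fin n)
  set p : ℝ := (1 : ℝ) - n with hp_def
  obtain ⟨M, hM, hbound⟩ := exists_D3_bound (E := E) p
  have hq : p - 3 = -(n : ℝ) - 2 := by rw [hp_def]; ring
  refine ⟨M * 6 ^ ((n : ℝ) + 2), by positivity, fun x y t hyx ht ht3 => ?_⟩
  have hx : 0 < ‖x‖ := by
    have : 0 < ‖x‖ / 3 := lt_trans ht ht3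
    linarith
  set g₁ := fderiv ℝ (fI p : E → ℝ) with hg1
  set g₂ := fderiv ℝ g₁ with hg2
  set A : ℝ := M * (‖x‖ / 6) ^ (p - 3) with hA_def
  -- the big region S
  set S : Set E := closedBall x (t + ‖x‖ / 2) with hS_def
  have hS_norm : ∀ ζ ∈ S, ‖x‖ / 6 ≤ ‖ζ‖ := by
    intro ζ hζ
    have h1 : ‖x‖ - ‖ζ‖ ≤ ‖x - ζ‖ := norm_sub_norm_le x ζ
    have h2 : ‖x - ζ‖ ≤ t + ‖x‖ / 2 := by
      rw [← dist_eq_norm, dist_comm]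
      exact mem_closedBall.1 hζ
    linarith
  have hS_ne : ∀ ζ ∈ S, ζ ≠ 0 := by
    intro ζ hζ h0
    have := hS_norm ζ hζ
    rw [h0, norm_zero] at this
    linarith
  -- third derivative bound on S
  have hA : ∀ ζ ∈ S, ‖fderiv ℝ g₂ ζ‖ ≤ A := by
    intro ζ hζ
    refine le_trans (hbound ζ (hS_ne ζ hζ)) ?_
    rw [hA_def]
    have hq0 : p - 3 ≤ 0 := by
      have : (3:ℝ) ≤ (n:ℝ) := by exact_mod_cast hn
      rw [hp_def]; linarith
    have := Real.rpow_le_rpow_of_nonpos (by positivity : (0:ℝ) < ‖x‖ / 6) (hS_norm ζ hζ) hq0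
    exact mul_le_mul_of_nonneg_left this hM.le
  -- membership of the segment endpoints in S
  have hy2 : ‖y‖ ≤ ‖x‖ / 2 := by linarith
  have hball_S : closedBall x t ⊆ S := closedBall_subset_closedBall (by linarith)
  have hsub_S : ∀ w ∈ closedBall x t, w - y ∈ S := by
    intro w hw
    rw [hS_def, mem_closedBall]
    calc dist (w - y) x ≤ dist (w - y) w + dist w x := dist_triangle _ _ _
      _ ≤ ‖y‖ + t := by
          rw [dist_eq_norm]
          have : w - y - w = -y := by abel
          rw [this, norm_neg]
          exact add_le_add le_rfl (mem_closedBall.1 hw)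
      _ ≤ t + ‖x‖ / 2 := by linarith
  -- Lipschitz bound for g₂ differences
  have hg2lip : ∀ w ∈ closedBall x t, ‖g₂ (w - y) - g₂ w‖ ≤ A * ‖y‖ := by
    intro w hw
    have := (convex_closedBall x (t + ‖x‖ / 2)).norm_image_sub_le_of_norm_fderiv_le
      (fun ζ hζ => fI_diff2 p (hS_ne ζ hζ)) hA (hball_S hw) (hsub_S w hw)
    have heq : w - y - w = -y := by abel
    rwa [heq, norm_neg] at this
  -- derivative structure of G and H
  set H : E → (E →L[ℝ] ℝ) := fun w => g₁ (w - y) - g₁ w with hH_def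
  set G : E → ℝ := fun w => fI p (w - y) - fI p w with hG_def
  have hw_ne : ∀ w ∈ closedBall x t, w ≠ 0 := fun w hw => hS_ne w (hball_S hw)
  have hwy_ne : ∀ w ∈ closedBall x t, w - y ≠ 0 := fun w hw => hS_ne _ (hsub_S w hw)
  have hGderiv : ∀ w ∈ closedBall x t, HasFDerivAt G (H w) w := by
    intro w hw
    have h1 : HasFDerivAt (fun w : E => fI p (w - y)) (g₁ (w - y)) w := by
      have := (fI_diff0 p (hwy_ne w hw)).hasFDerivAt.comp w ((hasFDerivAt_id w).sub_const y)
      simpa [Function.comp_def] using this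
    exact h1.sub (fI_diff0 p (hw_ne w hw)).hasFDerivAt
  have hHderiv : ∀ w ∈ closedBall x t, HasFDerivAt H (g₂ (w - y) - g₂ w) w := by
    intro w hw
    have h1 : HasFDerivAt (fun w : E => g₁ (w - y)) (g₂ (w - y)) w := by
      have := (fI_diff1 p (hwy_ne w hw)).hasFDerivAt.comp w ((hasFDerivAt_id w).sub_const y)
      simpa [Function.comp_def] using this
    exact h1.sub (fI_diff1 p (hw_ne w hw)).hasFDerivAt
  have hH_lip : ∀ z ∈ closedBall x t, ‖H z - H x‖ ≤ (A * ‖y‖) * t := by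
    intro z hz
    have hxmem : x ∈ closedBall x t := mem_closedBall_self ht.le
    have h1 := (convex_closedBall x t).norm_image_sub_le_of_norm_fderiv_le
      (fun w hw => (hHderiv w hw).differentiableAt)
      (fun w hw => by rw [(hHderiv w hw).fderiv]; exact hg2lip w hw) hxmem hz
    have hzx : ‖z - x‖ ≤ t := by rwa [← dist_eq_norm, ← mem_closedBall]
    have hAy : 0 ≤ A * ‖y‖ := by
      have : 0 ≤ A := le_trans (norm_nonneg (fderiv ℝ g₂ x)) (hA x (hball_S (mem_closedBall_self ht.le)))
      positivity
    calc ‖H z - H x‖ ≤ A * ‖y‖ * ‖z - x‖ := h1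
      _ ≤ A * ‖y‖ * t := mul_le_mul_of_nonneg_left hzx hAy
  -- the key average bound
  have hkey : |(⨍ z in ball x t, G z) - G x| ≤ (A * ‖y‖) * t ^ 2 :=
    abs_average_sub_le volume ht G H hGderiv hH_lip
  -- rewrite the rieszK difference
  have hfi_int : IntegrableOn (fI p : E → ℝ) (ball x t) volume := by
    have hcont : ContinuousOn (fI p : E → ℝ) (closedBall x t) := fun w hw =>
      ((contDiffAt_fI p (hw_ne w hw) (m := 0)).continuousAt).continuousWithinAt
    exact (hcont.integrableOn_compact (isCompact_closedBall x t)).mono_set ball_subset_closedBall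
  have hfiy_int : IntegrableOn (fun z : E => fI p (z - y)) (ball x t) volume := by
    have hcont : ContinuousOn (fun z : E => fI p (z - y)) (closedBall x t) := by
      intro w hw
      have h1 : ContinuousAt (fun z : E => z - y) w := by fun_prop
      have h2 : ContinuousAt (fI p : E → ℝ) (w - y) :=
        (contDiffAt_fI p (hwy_ne w hw) (m := 0)).continuousAt
      exact (ContinuousAt.comp (f := fun z : E => z - y) (x := w) h2 h1).continuousWithinAt
    exact (hcont.integrableOn_compact (isCompact_closedBall x t)).mono_set ball_subset_closedBall
  have hvol_eq : volume (ball (x - y) t) = volume (ball x t) := by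
    rw [Measure.addHaar_ball_center volume (x - y) t, Measure.addHaar_ball_center volume x t]
  have havg_shift : ⨍ z in ball (x - y) t, fI p z = ⨍ z in ball x t, fI p (z - y) := by
    rw [setAverage_eq, setAverage_eq, measureReal_def, measureReal_def, hvol_eq, setIntegral_ball_sub volume (fI p) x y t]
  have hdiff : rieszK n t (x - y) - rieszK n t x = (⨍ z in ball x t, G z) - G x := by
    have h1 : rieszK n t (x - y) = (⨍ z in ball (x - y) t, fI p z) - fI p (x - y) := rfl
    have h2 : rieszK n t x = (⨍ z in ball x t, fI p z) - fI p x := rfl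
    rw [h1, h2, havg_shift]
    have h3 : ⨍ z in ball x t, G z
        = (⨍ z in ball x t, fI p (z - y)) - ⨍ z in ball x t, fI p z := by
      rw [setAverage_eq, setAverage_eq, setAverage_eq, hG_def,
        integral_sub hfiy_int hfi_int, smul_sub]
    rw [h3, hG_def]
    ring
  rw [hdiff]
  refine le_trans hkey ?_
  -- final constant arithmetic
  rw [hA_def, hq]
  rw [Real.div_rpow (norm_nonneg x) (by norm_num : (0:ℝ) ≤ 6)]
  have h6 : (6:ℝ) ^ (-(n:ℝ) - 2) = ((6:ℝ) ^ ((n:ℝ) + 2))⁻¹ := by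
    rw [show -(n:ℝ) - 2 = -((n:ℝ) + 2) by ring, Real.rpow_neg (by norm_num)]
  rw [h6]
  have h6pos : (0:ℝ) < (6:ℝ) ^ ((n:ℝ) + 2) := by positivity
  apply le_of_eq
  field_simp
end

section
/- Let n ≥ 3 and I(x) = |x|^{1−n}, K_t(x) = (1/|B(x,t)|)∫_{B(x,t)} I(y) dy − I(x). If |x| ≥ 2|y| and t ≥ 2|x|, then |K_t(x−y) − K_t(x)| ≤ C·|y|·|x|^{−n}, and consequently (∫_{2|x|}^∞ |K_t(x−y) − K_t(x)|² t^{−3} dt)^{1/2} ≤ C·|y|·|x|^{−n−1}. -/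
open MeasureTheory

open Metric Set in
lemma mvt_rpow_neg {p : ℝ} (hp : p ≤ 0) {m u v : ℝ} (hm : 0 < m) (hu : m ≤ u) (hv : m ≤ v) :
    |u ^ p - v ^ p| ≤ -p * m ^ (p - 1) * |u - v| := by
  have h := Convex.norm_image_sub_le_of_norm_deriv_le (𝕜 := ℝ) (f := fun s : ℝ => s ^ p)
    (s := Set.Ici m) (x := v) (y := u) (C := -p * m ^ (p - 1))
    (fun z hz => (Real.hasDerivAt_rpow_const (Or.inl (ne_of_gt (lt_of_lt_of_le hm hz.out)))).differentiableAt)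
    (fun z hz => by
      have hz0 : 0 < z := lt_of_lt_of_le hm hz.out
      rw [(Real.hasDerivAt_rpow_const (p := p) (Or.inl hz0.ne')).deriv]
      rw [Real.norm_eq_abs, abs_mul, abs_of_nonneg (Real.rpow_nonneg hz0.le _)]
      have : |p| = -p := abs_of_nonpos hp
      rw [this]
      have : z ^ (p - 1) ≤ m ^ (p - 1) := Real.rpow_le_rpow_of_nonpos hm hz.out (by linarith)
      nlinarith [neg_nonneg.mpr hp, Real.rpow_nonneg hz0.le (p-1)])
    (convex_Ici m) hv hu
  simpa [Real.norm_eq_abs] using h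

open Metric Set in
lemma mvt_rpow_pos {p : ℝ} (hp : 1 ≤ p) {M u v : ℝ} (hu : 0 ≤ u) (hu' : u ≤ M) (hv : 0 ≤ v) (hv' : v ≤ M) :
    |u ^ p - v ^ p| ≤ p * M ^ (p - 1) * |u - v| := by
  have h := Convex.norm_image_sub_le_of_norm_deriv_le (𝕜 := ℝ) (f := fun s : ℝ => s ^ p)
    (s := Set.Icc 0 M) (x := v) (y := u) (C := p * M ^ (p - 1))
    (fun z _ => (Real.hasDerivAt_rpow_const (Or.inr hp)).differentiableAt)
    (fun z hz => by
      rw [(Real.hasDerivAt_rpow_const (p := p) (Or.inr hp)).deriv]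
      rw [Real.norm_eq_abs, abs_mul, abs_of_nonneg (Real.rpow_nonneg hz.1 _),
        abs_of_nonneg (by linarith)]
      have : z ^ (p - 1) ≤ M ^ (p - 1) := Real.rpow_le_rpow hz.1 hz.2 (by linarith)
      nlinarith)
    (convex_Icc 0 M) ⟨hv, hv'⟩ ⟨hu, hu'⟩
  simpa [Real.norm_eq_abs] using h

open Metric Set in
lemma integrableOn_riesz_ball {n : ℕ} (hn : 3 ≤ n) {R : ℝ} (hR : 0 < R) :
    IntegrableOn (fun z : EuclideanSpace ℝ (Fin n) => ‖z‖ ^ ((1:ℝ) - n))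
      (Metric.ball 0 R) := by
  haveI : Nonempty (Fin n) := ⟨⟨0, by omega⟩⟩
  set E := EuclideanSpace ℝ (Fin n)
  have hn' : (3:ℝ) ≤ (n:ℝ) := by exact_mod_cast hn
  have hq : (1:ℝ) - n ≤ 0 := by linarith
  set f : E → ℝ := fun z => ‖z‖ ^ ((1:ℝ) - n) with hf
  have hfnn : ∀ z, 0 ≤ f z := fun z => Real.rpow_nonneg (norm_nonneg z) _
  have hmeas : Measurable f := by fun_prop
  refine ⟨hmeas.aestronglyMeasurable, ?_⟩
  rw [hasFiniteIntegral_iff_ofReal (Filter.Eventually.of_forall hfnn)]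
  set S : ℕ → Set E := fun k => {z : E | R / 2 ^ (k+1) ≤ ‖z‖} ∩ Metric.ball 0 (R / 2 ^ k) with hS
  have hcover : Metric.ball (0:E) R ⊆ {0} ∪ ⋃ k, S k := by
    intro z hz
    rw [mem_ball_zero_iff] at hz
    by_cases hz0 : z = 0
    · exact Or.inl (by simp [hz0])
    · right
      have hz0' : 0 < ‖z‖ := norm_pos_iff.mpr hz0
      have hex : ∃ k : ℕ, R / 2 ^ (k+1) ≤ ‖z‖ := by
        obtain ⟨N, hN⟩ := pow_unbounded_of_one_lt (R / ‖z‖) (one_lt_two (α := ℝ))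
        refine ⟨N, ?_⟩
        rw [div_le_iff₀ (by positivity)]
        rw [div_lt_iff₀ hz0'] at hN
        have : (2:ℝ) ^ N ≤ 2 ^ (N+1) := by
          apply pow_le_pow_right₀ one_le_two; omega
        nlinarith
      refine mem_iUnion.2 ⟨Nat.find hex, Nat.find_spec hex, ?_⟩
      rw [mem_ball_zero_iff]
      rcases Nat.eq_zero_or_pos (Nat.find hex) with h0 | hpos
      · rw [h0]; simpa using hz
      · obtain ⟨j, hj⟩ : ∃ j, Nat.find hex = j + 1 := ⟨Nat.find hex - 1, by omega⟩
        have := Nat.find_min hex (m := j) (by omega)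
        push_neg at this
        rw [hj]; exact this
  set MB := volume (Metric.ball (0:E) 1) with hMB
  have hMBfin : MB ≠ ⊤ := measure_ball_lt_top.ne
  have key : ∀ k : ℕ, (∫⁻ z in S k, ENNReal.ofReal (f z)) ≤
      (ENNReal.ofReal (1/2:ℝ)) ^ k * (ENNReal.ofReal (2^n * R) * MB) := by
    intro k
    set a : ℝ := R / 2 ^ (k+1) with ha
    have ha0 : 0 < a := by positivity
    calc ∫⁻ z in S k, ENNReal.ofReal (f z)
        ≤ ∫⁻ _ in S k, ENNReal.ofReal (a ^ ((1:ℝ) - n)) := by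
          refine setLIntegral_mono measurable_const fun z hz => ?_
          exact ENNReal.ofReal_le_ofReal
            (Real.rpow_le_rpow_of_nonpos ha0 hz.1 hq)
      _ = ENNReal.ofReal (a ^ ((1:ℝ) - n)) * volume (S k) := setLIntegral_const _ _
      _ ≤ ENNReal.ofReal (a ^ ((1:ℝ) - n)) * volume (Metric.ball (0:E) (R / 2 ^ k)) := by
          exact mul_le_mul_right (measure_mono inter_subset_right) _
      _ = ENNReal.ofReal (a ^ ((1:ℝ) - n)) *
            (ENNReal.ofReal ((R / 2 ^ k) ^ n) * MB) := by
          rw [Measure.addHaar_ball volume _ (by positivity : (0:ℝ) ≤ R / 2 ^ k),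
            finrank_euclideanSpace_fin]
      _ = ENNReal.ofReal (a ^ ((1:ℝ) - n) * (R / 2 ^ k) ^ n) * MB := by
          rw [ENNReal.ofReal_mul (Real.rpow_nonneg ha0.le _), mul_assoc]
      _ ≤ (ENNReal.ofReal (1/2:ℝ)) ^ k * (ENNReal.ofReal (2^n * R) * MB) := by
          rw [← ENNReal.ofReal_pow (by norm_num), ← mul_assoc,
            ← ENNReal.ofReal_mul (by positivity)]
          refine mul_le_mul_left (ENNReal.ofReal_le_ofReal ?_) MB
          have h2a : R / 2 ^ k = 2 * a := by
            rw [ha, pow_succ]; field_simp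
          rw [h2a, mul_pow]
          have heq : a ^ ((1:ℝ) - n) * ((2:ℝ) ^ n * a ^ n) = 2 ^ n * a := by
            rw [← Real.rpow_natCast a n, ← mul_assoc, mul_comm (a ^ ((1:ℝ)-n)) ((2:ℝ)^n),
              mul_assoc, ← Real.rpow_add ha0]
            norm_num
          rw [heq, ha]
          calc (2:ℝ) ^ n * (R / 2 ^ (k+1)) ≤ 2 ^ n * (R / 2 ^ k) := by
                gcongr
                · exact one_le_two
                · omega
            _ = (1/2) ^ k * (2 ^ n * R) := by rw [div_pow, one_pow]; ring
  calc ∫⁻ z in Metric.ball (0:E) R, ENNReal.ofReal (f z)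
      ≤ ∫⁻ z in ({0} ∪ ⋃ k, S k : Set E), ENNReal.ofReal (f z) :=
        lintegral_mono_set hcover
    _ ≤ (∫⁻ z in ({0} : Set E), ENNReal.ofReal (f z)) +
          ∫⁻ z in (⋃ k, S k), ENNReal.ofReal (f z) := lintegral_union_le _ _ _
    _ ≤ 0 + ∑' k, ∫⁻ z in S k, ENNReal.ofReal (f z) := by
        refine add_le_add ?_ (lintegral_iUnion_le _ _)
        rw [setLIntegral_measure_zero _ _ (measure_singleton 0)]
    _ ≤ 0 + ∑' k : ℕ, (ENNReal.ofReal (1/2:ℝ)) ^ k * (ENNReal.ofReal (2^n * R) * MB) := by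
        exact add_le_add le_rfl (ENNReal.tsum_le_tsum key)
    _ < ⊤ := by
        rw [zero_add, ENNReal.tsum_mul_right, ENNReal.tsum_geometric]
        refine ENNReal.mul_lt_top ?_ (ENNReal.mul_lt_top ENNReal.ofReal_lt_top
          hMBfin.lt_top)
        rw [ENNReal.inv_lt_top]
        rw [tsub_pos_iff_lt]
        exact ENNReal.ofReal_lt_one.mpr (by norm_num)

open Metric Set in
lemma rieszK_diff_le {n : ℕ} (hn : 3 ≤ n) (x y : EuclideanSpace ℝ (Fin n))
    (hxy : 2 * ‖y‖ ≤ ‖x‖) (hx : 0 < ‖x‖) {t : ℝ} (ht : 2 * ‖x‖ ≤ t) :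
    |rieszK n t (x - y) - rieszK n t x| ≤
      ((n:ℝ) * (4 * 8 ^ ((n:ℝ) - 1) * 2 ^ (-(n:ℝ))) + ((n:ℝ) - 1) * 2 ^ (n:ℝ)) *
        ‖y‖ * ‖x‖ ^ (-(n:ℝ)) := by
  haveI : Nonempty (Fin n) := ⟨⟨0, by omega⟩⟩
  have hn' : (3:ℝ) ≤ (n:ℝ) := by exact_mod_cast hn
  set q : ℝ := (1:ℝ) - n with hqdef
  have hq : q ≤ 0 := by rw [hqdef]; linarith
  set r : ℝ := ‖y‖ with hrdef
  have hr : 0 ≤ r := norm_nonneg y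
  have ht0 : 0 < t := lt_of_lt_of_le (by linarith) ht
  have hrt : 4 * r ≤ t := by linarith
  set I : EuclideanSpace ℝ (Fin n) → ℝ := fun z => ‖z‖ ^ q with hIdef
  set B1 : Set (EuclideanSpace ℝ (Fin n)) := Metric.ball (x - y) t with hB1
  set B2 : Set (EuclideanSpace ℝ (Fin n)) := Metric.ball x t with hB2
  set A : Set (EuclideanSpace ℝ (Fin n)) := Metric.ball x (t + r) \ Metric.ball x (t - r) with hA
  -- lower bound for norms on A
  have hAlow : ∀ z ∈ A, t / 4 ≤ ‖z‖ := by
    intro z hz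
    have h2 : t - r ≤ dist z x := not_lt.mp (fun h => hz.2 (mem_ball.mpr h))
    rw [dist_eq_norm] at h2
    have h3 : ‖z - x‖ - ‖z‖ ≤ ‖x‖ := by
      have := norm_sub_norm_le (z - x) z
      simpa using this
    linarith
  have hIb : ∀ z ∈ A, ‖I z‖ ≤ (t/4) ^ q := by
    intro z hz
    rw [Real.norm_eq_abs, abs_of_nonneg (Real.rpow_nonneg (norm_nonneg z) _)]
    exact Real.rpow_le_rpow_of_nonpos (by linarith) (hAlow z hz) hq
  have hsub1 : B1 \ B2 ⊆ A := by
    rintro z ⟨h1, h2⟩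
    rw [hB1, mem_ball] at h1
    rw [hB2, mem_ball] at h2
    have hd : dist (x - y) x = r := by rw [dist_eq_norm]; simp [hrdef]
    constructor
    · rw [mem_ball]
      calc dist z x ≤ dist z (x - y) + dist (x - y) x := dist_triangle _ _ _
        _ < t + r := by rw [hd]; linarith
    · intro hzm
      rw [mem_ball] at hzm
      exact h2 (by linarith)
  have hsub2 : B2 \ B1 ⊆ A := by
    rintro z ⟨h1, h2⟩
    rw [hB2, mem_ball] at h1
    rw [hB1, mem_ball] at h2
    have hd : dist x (x - y) = r := by rw [dist_eq_norm]; simp [hrdef]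
    constructor
    · rw [mem_ball]; linarith
    · intro hzm
      rw [mem_ball] at hzm
      have : dist z (x - y) ≤ dist z x + dist x (x - y) := dist_triangle _ _ _
      rw [hd] at this
      exact h2 (by linarith)
  -- integrability
  have hball1 : B1 ⊆ Metric.ball (0:EuclideanSpace ℝ (Fin n)) (t + ‖x - y‖) := by
    rw [hB1]
    refine ball_subset_ball' ?_
    rw [dist_zero_right]
  have hball2 : B2 ⊆ Metric.ball (0:EuclideanSpace ℝ (Fin n)) (t + ‖x‖) := by
    rw [hB2]
    refine ball_subset_ball' ?_
    rw [dist_zero_right]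
  have hint1 : IntegrableOn I B1 := by
    refine (integrableOn_riesz_ball hn (R := t + ‖x - y‖) (by positivity)).mono_set hball1
  have hint2 : IntegrableOn I B2 := by
    refine (integrableOn_riesz_ball hn (R := t + ‖x‖) (by positivity)).mono_set hball2
  -- split integrals
  set D1 : ℝ := ∫ z in B1 \ B2, I z with hD1
  set D2 : ℝ := ∫ z in B2 \ B1, I z with hD2
  have hsplit : (∫ z in B1, I z) - ∫ z in B2, I z = D1 - D2 := by
    have e1 := integral_inter_add_diff (μ := volume) (f := I) (s := B1) (t := B2)
      measurableSet_ball hint1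
    have e2 := integral_inter_add_diff (μ := volume) (f := I) (s := B2) (t := B1)
      measurableSet_ball hint2
    rw [Set.inter_comm] at e2
    rw [hD1, hD2]; linarith
  -- measure of A
  set MB : ENNReal := volume (Metric.ball (0:EuclideanSpace ℝ (Fin n)) 1) with hMB
  set ω : ℝ := MB.toReal with hωdef
  have hω : 0 < ω := ENNReal.toReal_pos (measure_ball_pos volume _ one_pos).ne'
    measure_ball_lt_top.ne
  have hAm : (volume A).toReal = ((t+r)^n - (t-r)^n) * ω := by
    rw [hA, measure_diff (ball_subset_ball (by linarith))
      measurableSet_ball.nullMeasurableSet measure_ball_lt_top.ne]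
    rw [Measure.addHaar_ball volume x (by linarith : (0:ℝ) ≤ t + r),
      Measure.addHaar_ball volume x (by linarith : (0:ℝ) ≤ t - r),
      finrank_euclideanSpace_fin]
    rw [ENNReal.toReal_sub_of_le
      (mul_le_mul_left (ENNReal.ofReal_le_ofReal
        (pow_le_pow_left₀ (by linarith) (by linarith) n)) MB)
      (ENNReal.mul_ne_top ENNReal.ofReal_ne_top measure_ball_lt_top.ne)]
    rw [ENNReal.toReal_mul, ENNReal.toReal_mul,
      ENNReal.toReal_ofReal (pow_nonneg (by linarith) n),
      ENNReal.toReal_ofReal (pow_nonneg (by linarith) n)]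
    ring
  have hAfin : volume A ≠ ⊤ := by
    refine ((measure_mono (diff_subset)).trans_lt measure_ball_lt_top).ne
  set c : ℝ := (n:ℝ) - 1 with hcdef
  have hAnn : ((t+r)^n - (t-r)^n) ≤ (n:ℝ) * (2*t) ^ c * (2*r) := by
    have h := mvt_rpow_pos (p := (n:ℝ)) (by linarith) (M := 2*t)
      (u := t + r) (v := t - r) (by linarith) (by linarith) (by linarith) (by linarith)
    rw [Real.rpow_natCast, Real.rpow_natCast] at h
    have habs : |(t+r) - (t-r)| = 2*r := by rw [abs_of_nonneg (by linarith)]; ring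
    rw [habs] at h
    calc ((t+r)^n - (t-r)^n) ≤ |(t+r)^n - (t-r)^n| := le_abs_self _
      _ ≤ (n:ℝ) * (2*t) ^ ((n:ℝ) - 1) * (2*r) := h
      _ = (n:ℝ) * (2*t) ^ c * (2*r) := by rw [hcdef]
  -- bound D1 D2
  have hDb : ∀ (s : Set (EuclideanSpace ℝ (Fin n))), s ⊆ A → IntegrableOn I s →
      |∫ z in s, I z| ≤ (t/4) ^ q * (volume A).toReal := by
    intro s hs hi
    have hfin : volume s < ⊤ := (measure_mono (hs.trans diff_subset)).trans_lt
      measure_ball_lt_top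
    have := norm_setIntegral_le_of_norm_le_const (μ := volume) (s := s)
      (C := (t/4) ^ q) hfin (fun z hz => hIb z (hs hz))
    rw [Real.norm_eq_abs] at this
    refine this.trans ?_
    refine mul_le_mul_of_nonneg_left ?_ (Real.rpow_nonneg (by positivity) _)
    exact ENNReal.toReal_mono hAfin (measure_mono hs)
  have hD1b := hDb _ hsub1 (hint1.mono_set diff_subset)
  have hD2b := hDb _ hsub2 (hint2.mono_set diff_subset)
  -- the key power identity
  have h8 : (t/4) ^ q * (2*t) ^ c = 8 ^ c := by
    have hqc : q = -c := by rw [hqdef, hcdef]; ring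
    rw [hqc, Real.rpow_neg (by positivity), ← Real.inv_rpow (by positivity),
      ← Real.mul_rpow (by positivity) (by positivity)]
    congr 1
    field_simp
    ring
  have hP : (t/4) ^ q * (volume A).toReal ≤ 8 ^ c * ((n:ℝ) * (2*r) * ω) := by
    calc (t/4) ^ q * (volume A).toReal
        ≤ (t/4) ^ q * (((n:ℝ) * (2*t) ^ c * (2*r)) * ω) := by
          refine mul_le_mul_of_nonneg_left ?_ (Real.rpow_nonneg (by positivity) _)
          rw [hAm]
          exact mul_le_mul_of_nonneg_right hAnn hω.le
      _ = ((t/4) ^ q * (2*t) ^ c) * ((n:ℝ) * (2*r) * ω) := by ring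
      _ = 8 ^ c * ((n:ℝ) * (2*r) * ω) := by rw [h8]
  -- volumes of the two balls
  have hvol : volume B1 = ENNReal.ofReal (t ^ n) * MB := by
    rw [hB1, Measure.addHaar_ball volume _ ht0.le, finrank_euclideanSpace_fin]
  have hvol2 : volume B2 = ENNReal.ofReal (t ^ n) * MB := by
    rw [hB2, Measure.addHaar_ball volume _ ht0.le, finrank_euclideanSpace_fin]
  set v : ℝ := (ENNReal.ofReal (t ^ n) * MB).toReal with hvdef
  have hveq : v = t ^ ((n:ℝ)) * ω := by
    rw [hvdef, ENNReal.toReal_mul, ENNReal.toReal_ofReal (by positivity),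
      Real.rpow_natCast]
  have hvpos : 0 < v := by
    rw [hveq]; positivity
  -- average difference
  have havg : (⨍ z in B1, I z) - ⨍ z in B2, I z = v⁻¹ * (D1 - D2) := by
    rw [setAverage_eq, setAverage_eq, measureReal_def, measureReal_def, hvol, hvol2, smul_eq_mul, smul_eq_mul, ← hvdef,
      ← mul_sub, hsplit]
  have havgb : |(⨍ z in B1, I z) - ⨍ z in B2, I z| ≤
      ((n:ℝ) * (4 * 8 ^ c * 2 ^ (-(n:ℝ)))) * r * ‖x‖ ^ (-(n:ℝ)) := by
    rw [havg, abs_mul, abs_of_nonneg (inv_nonneg.mpr hvpos.le)]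
    have h1 : |D1 - D2| ≤ 2 * (8 ^ c * ((n:ℝ) * (2*r) * ω)) := by
      calc |D1 - D2| ≤ |D1| + |D2| := abs_sub _ _
        _ ≤ ((t/4) ^ q * (volume A).toReal) + ((t/4) ^ q * (volume A).toReal) :=
            add_le_add hD1b hD2b
        _ ≤ (8 ^ c * ((n:ℝ) * (2*r) * ω)) + (8 ^ c * ((n:ℝ) * (2*r) * ω)) :=
            add_le_add hP hP
        _ = 2 * (8 ^ c * ((n:ℝ) * (2*r) * ω)) := by ring
    calc v⁻¹ * |D1 - D2| ≤ v⁻¹ * (2 * (8 ^ c * ((n:ℝ) * (2*r) * ω))) :=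
          mul_le_mul_of_nonneg_left h1 (inv_nonneg.mpr hvpos.le)
      _ = ((n:ℝ) * (4 * 8 ^ c)) * r * (t ^ ((n:ℝ)))⁻¹ := by
          rw [hveq]
          have h8c : (0:ℝ) < 8 ^ c := Real.rpow_pos_of_pos (by norm_num) _
          have htn : (0:ℝ) < t ^ ((n:ℝ)) := Real.rpow_pos_of_pos ht0 _
          field_simp
          ring
      _ ≤ ((n:ℝ) * (4 * 8 ^ c)) * r * (2 ^ (-(n:ℝ)) * ‖x‖ ^ (-(n:ℝ))) := by
          refine mul_le_mul_of_nonneg_left ?_ (by positivity)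
          rw [← Real.rpow_neg ht0.le]
          calc t ^ (-(n:ℝ)) ≤ (2 * ‖x‖) ^ (-(n:ℝ)) :=
                Real.rpow_le_rpow_of_nonpos (by linarith) ht (by linarith)
            _ = 2 ^ (-(n:ℝ)) * ‖x‖ ^ (-(n:ℝ)) :=
                Real.mul_rpow (by norm_num) hx.le
      _ = ((n:ℝ) * (4 * 8 ^ c * 2 ^ (-(n:ℝ)))) * r * ‖x‖ ^ (-(n:ℝ)) := by ring
  -- pointwise part
  have hIstep : |I (x - y) - I x| ≤ (((n:ℝ) - 1) * 2 ^ (n:ℝ)) * r * ‖x‖ ^ (-(n:ℝ)) := by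
    have hu : ‖x‖ / 2 ≤ ‖x - y‖ := by
      have h1 : ‖x‖ - ‖x - y‖ ≤ ‖y‖ := by
        have := norm_sub_norm_le x (x - y)
        simpa using this
      linarith
    have h := mvt_rpow_neg (p := q) hq (m := ‖x‖/2) (u := ‖x - y‖) (v := ‖x‖)
      (by linarith) hu (by linarith)
    have habs : |‖x - y‖ - ‖x‖| ≤ r := by
      have := abs_norm_sub_norm_le (x - y) x
      simpa [hrdef] using this
    have hq1 : q - 1 = -(n:ℝ) := by rw [hqdef]; ring
    have hmq : -q = (n:ℝ) - 1 := by rw [hqdef]; ring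
    have hpow : (‖x‖/2) ^ (q - 1) = 2 ^ (n:ℝ) * ‖x‖ ^ (-(n:ℝ)) := by
      rw [hq1, Real.div_rpow hx.le (by norm_num), Real.rpow_neg (by norm_num : (0:ℝ) ≤ 2),
        div_eq_mul_inv, inv_inv, mul_comm]
    calc |I (x - y) - I x| ≤ -q * (‖x‖/2) ^ (q - 1) * |‖x - y‖ - ‖x‖| := h
      _ ≤ -q * (‖x‖/2) ^ (q - 1) * r := by
          refine mul_le_mul_of_nonneg_left habs ?_
          have : (0:ℝ) ≤ -q := by linarith
          positivity
      _ = (((n:ℝ) - 1) * 2 ^ (n:ℝ)) * r * ‖x‖ ^ (-(n:ℝ)) := by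
          rw [hmq, hpow]; ring
  -- combine
  have hdecomp : rieszK n t (x - y) - rieszK n t x =
      ((⨍ z in B1, I z) - ⨍ z in B2, I z) - (I (x - y) - I x) := by
    simp only [rieszK, hIdef, hB1, hB2, hqdef]
    ring
  rw [hdecomp]
  calc |((⨍ z in B1, I z) - ⨍ z in B2, I z) - (I (x - y) - I x)|
      ≤ |(⨍ z in B1, I z) - ⨍ z in B2, I z| + |I (x - y) - I x| := abs_sub _ _
    _ ≤ ((n:ℝ) * (4 * 8 ^ c * 2 ^ (-(n:ℝ)))) * r * ‖x‖ ^ (-(n:ℝ)) +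
        (((n:ℝ) - 1) * 2 ^ (n:ℝ)) * r * ‖x‖ ^ (-(n:ℝ)) := add_le_add havgb hIstep
    _ = ((n:ℝ) * (4 * 8 ^ ((n:ℝ) - 1) * 2 ^ (-(n:ℝ))) + ((n:ℝ) - 1) * 2 ^ (n:ℝ)) *
        r * ‖x‖ ^ (-(n:ℝ)) := by rw [hcdef]; ring

open Metric Set in
theorem stmt_11 (n : ℕ) (hn : 3 ≤ n) :
    ∃ C : ℝ, 0 < C ∧ ∀ (x y : EuclideanSpace ℝ (Fin n)),
      2 * ‖y‖ ≤ ‖x‖ →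
      (∀ t : ℝ, 0 < t → 2 * ‖x‖ ≤ t →
        |rieszK n t (x - y) - rieszK n t x| ≤ C * ‖y‖ * ‖x‖ ^ (-(n : ℝ))) ∧
      Real.sqrt (∫ t in Set.Ioi (2 * ‖x‖),
          (rieszK n t (x - y) - rieszK n t x) ^ 2 / t ^ 3) ≤
        C * ‖y‖ * ‖x‖ ^ (-(n : ℝ) - 1) := by
  have hn' : (3:ℝ) ≤ (n:ℝ) := by exact_mod_cast hn
  set C : ℝ := (n:ℝ) * (4 * 8 ^ ((n:ℝ) - 1) * 2 ^ (-(n:ℝ))) + ((n:ℝ) - 1) * 2 ^ (n:ℝ)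
    with hCdef
  have hC : 0 < C := by
    have h1 : (0:ℝ) < (n:ℝ) * (4 * 8 ^ ((n:ℝ) - 1) * 2 ^ (-(n:ℝ))) := by positivity
    have h2 : (0:ℝ) < ((n:ℝ) - 1) * 2 ^ (n:ℝ) := by
      have : (0:ℝ) < (n:ℝ) - 1 := by linarith
      positivity
    linarith
  refine ⟨C, hC, fun x y hxy => ?_⟩
  rcases eq_or_lt_of_le (norm_nonneg x) with hx0 | hx
  · -- x = 0, hence y = 0
    have hx' : x = 0 := by rwa [eq_comm, norm_eq_zero] at hx0
    have hy' : y = 0 := by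
      have h0 : ‖y‖ = 0 := le_antisymm (by rw [← hx0] at hxy; linarith) (norm_nonneg y)
      rwa [norm_eq_zero] at h0
    subst hx'; subst hy'
    constructor
    · intro t _ _
      simp
    · simp
  · constructor
    · intro t _ ht
      exact rieszK_diff_le hn x y hxy hx ht
    · set a : ℝ := 2 * ‖x‖ with hadef
      have ha : 0 < a := by positivity
      set M : ℝ := C * ‖y‖ * ‖x‖ ^ (-(n:ℝ)) with hMdef
      have hM : 0 ≤ M := by positivity
      have hgint : IntegrableOn (fun t : ℝ => M ^ 2 * t ^ ((-3:ℝ))) (Set.Ioi a) := by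
        exact (integrableOn_Ioi_rpow_of_lt (by norm_num) ha).const_mul _
      have hle : (∫ t in Set.Ioi a, (rieszK n t (x - y) - rieszK n t x) ^ 2 / t ^ 3) ≤
          ∫ t in Set.Ioi a, M ^ 2 * t ^ ((-3:ℝ)) := by
        refine integral_mono_of_nonneg ?_ hgint ?_
        · filter_upwards [ae_restrict_mem measurableSet_Ioi] with t htm
          have ht0 : 0 < t := lt_trans ha htm
          positivity
        · filter_upwards [ae_restrict_mem measurableSet_Ioi] with t htm
          have ht0 : 0 < t := lt_trans ha htm
          have hb := rieszK_diff_le hn x y hxy hx (le_of_lt htm)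
          have h1 : (rieszK n t (x - y) - rieszK n t x) ^ 2 ≤ M ^ 2 := by
            rw [← sq_abs]
            exact pow_le_pow_left₀ (abs_nonneg _) hb 2
          have h2 : t ^ ((-3:ℝ)) = (t ^ 3)⁻¹ := by
            rw [show ((-3:ℝ)) = -((3:ℕ):ℝ) by norm_num, Real.rpow_neg ht0.le,
              Real.rpow_natCast]
          rw [h2, div_eq_mul_inv]
          exact mul_le_mul_of_nonneg_right h1 (by positivity)
      have hgval : (∫ t in Set.Ioi a, M ^ 2 * t ^ ((-3:ℝ))) = M ^ 2 * (a ^ ((-2:ℝ)) / 2) := by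
        rw [MeasureTheory.integral_const_mul, integral_Ioi_rpow_of_lt (by norm_num) ha]
        norm_num
      have hsq : Real.sqrt (∫ t in Set.Ioi a, (rieszK n t (x - y) - rieszK n t x) ^ 2 / t ^ 3)
          ≤ Real.sqrt (M ^ 2 * a ^ ((-2:ℝ))) := by
        refine Real.sqrt_le_sqrt ?_
        rw [hgval] at hle
        refine hle.trans ?_
        have h3 : (0:ℝ) ≤ a ^ ((-2:ℝ)) := Real.rpow_nonneg ha.le _
        nlinarith
      refine hsq.trans ?_
      have h4 : Real.sqrt (M ^ 2 * a ^ ((-2:ℝ))) = M * a⁻¹ := by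
        rw [show a ^ ((-2:ℝ)) = (a⁻¹) ^ (2:ℕ) by
          rw [show ((-2:ℝ)) = -((2:ℕ):ℝ) by norm_num, Real.rpow_neg ha.le,
            Real.rpow_natCast, inv_pow],
          ← mul_pow, Real.sqrt_sq (by positivity)]
      rw [h4]
      have h5 : M * a⁻¹ ≤ M * ‖x‖⁻¹ := by
        refine mul_le_mul_of_nonneg_left ?_ hM
        rw [hadef]
        refine inv_anti₀ hx (by linarith)
      refine h5.trans ?_
      rw [hMdef]
      have h6 : ‖x‖ ^ (-(n:ℝ)) * ‖x‖⁻¹ = ‖x‖ ^ (-(n:ℝ) - 1) := by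
        rw [show ‖x‖⁻¹ = ‖x‖ ^ ((-1:ℝ)) from (Real.rpow_neg_one ‖x‖).symm,
          ← Real.rpow_add hx]
        norm_num [sub_eq_add_neg]
      rw [mul_assoc, h6]
end

section
/- Let 0 < α < 1 and let I_α(x) = c|x|^{α−n} on ℝⁿ. For |x| ≥ 2|y| and t ≥ |x|/3, the difference of ball averages satisfies |(1/|B(x−y,t)|)∫_{B(x−y,t)} I_α − (1/|B(x,t)|)∫_{B(x,t)} I_α| ≤ C·t^{α−n−α/n}·|y|^{α/n}. -/
open MeasureTheory
open Metric Set Filter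

noncomputable section
namespace Stmt15

lemma meas_g (n : ℕ) (β : ℝ) : Measurable fun z : EuclideanSpace ℝ (Fin n) => ‖z‖ ^ β := by
  fun_prop

lemma integrableOn_g (n : ℕ) (hn : 0 < n) (α : ℝ) (hα : 0 < α) (hα1 : α < 1) (R : ℝ) :
    IntegrableOn (fun z : EuclideanSpace ℝ (Fin n) => ‖z‖ ^ (α - (n:ℝ))) (ball 0 R) volume := by
  haveI : Nonempty (Fin n) := ⟨⟨0, hn⟩⟩
  have hn1 : (1:ℝ) ≤ n := by exact_mod_cast hn
  have hαn : α - (n:ℝ) < 0 := by linarith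
  have hnn : ∀ z : EuclideanSpace ℝ (Fin n), 0 ≤ ‖z‖ ^ (α - (n:ℝ)) :=
    fun z => Real.rpow_nonneg (norm_nonneg z) _
  constructor
  · exact (meas_g n _).aestronglyMeasurable.restrict
  · rw [HasFiniteIntegral]
    have h1 : (∫⁻ a in ball (0 : EuclideanSpace ℝ (Fin n)) R, ‖‖a‖ ^ (α - (n:ℝ))‖ₑ ∂volume)
        = ∫⁻ a in ball (0 : EuclideanSpace ℝ (Fin n)) R, ENNReal.ofReal (‖a‖ ^ (α - (n:ℝ))) ∂volume :=
      lintegral_congr fun a => Real.enorm_eq_ofReal (hnn a)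
    rw [h1, lintegral_eq_lintegral_meas_le _ (ae_of_all _ hnn) ((meas_g n _).aemeasurable)]
    set ν := volume.restrict (ball (0 : EuclideanSpace ℝ (Fin n)) R) with hν
    set e : ℝ := (α - (n:ℝ))⁻¹ * n with he
    have he1 : e < -1 := by
      have h2 : e = (n:ℝ) / (α - n) := by rw [he]; ring
      rw [h2, div_lt_iff_of_neg hαn]
      linarith
    have key : ∀ t ∈ Ioi (1:ℝ), ν {a | t ≤ ‖a‖ ^ (α - (n:ℝ))}
        ≤ ENNReal.ofReal (t ^ e) * volume (ball (0 : EuclideanSpace ℝ (Fin n)) 1) := by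
      intro t ht
      have ht0 : (0:ℝ) < t := lt_trans one_pos ht
      have hsub : {a : EuclideanSpace ℝ (Fin n) | t ≤ ‖a‖ ^ (α - (n:ℝ))}
          ⊆ closedBall 0 (t ^ ((α - (n:ℝ))⁻¹)) := by
        intro a ha
        simp only [mem_setOf_eq] at ha
        simp only [mem_closedBall, dist_zero_right]
        have := Real.rpow_le_rpow_of_nonpos ht0 ha (le_of_lt (inv_neg''.mpr hαn))
        rwa [Real.rpow_rpow_inv (norm_nonneg a) (ne_of_lt hαn)] at this
      calc ν {a | t ≤ ‖a‖ ^ (α - (n:ℝ))}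
          ≤ volume {a : EuclideanSpace ℝ (Fin n) | t ≤ ‖a‖ ^ (α - (n:ℝ))} :=
            Measure.restrict_le_self _
        _ ≤ volume (closedBall 0 (t ^ ((α - (n:ℝ))⁻¹))) := measure_mono hsub
        _ = ENNReal.ofReal ((t ^ ((α - (n:ℝ))⁻¹)) ^ Module.finrank ℝ (EuclideanSpace ℝ (Fin n)))
              * volume (ball 0 1) := Measure.addHaar_closedBall _ _ (Real.rpow_nonneg ht0.le _)
        _ = ENNReal.ofReal (t ^ e) * volume (ball (0 : EuclideanSpace ℝ (Fin n)) 1) := by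
              rw [← Real.rpow_natCast (t ^ ((α - (n:ℝ))⁻¹)), ← Real.rpow_mul ht0.le,
                finrank_euclideanSpace_fin]
    calc ∫⁻ t in Ioi (0:ℝ), ν {a | t ≤ ‖a‖ ^ (α - (n:ℝ))}
        ≤ ∫⁻ t in Ioc (0:ℝ) 1 ∪ Ioi 1, ν {a | t ≤ ‖a‖ ^ (α - (n:ℝ))} :=
          lintegral_mono_set Ioi_subset_Ioc_union_Ioi
      _ ≤ (∫⁻ t in Ioc (0:ℝ) 1, ν {a | t ≤ ‖a‖ ^ (α - (n:ℝ))})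
            + ∫⁻ t in Ioi (1:ℝ), ν {a | t ≤ ‖a‖ ^ (α - (n:ℝ))} := lintegral_union_le _ _ _
      _ < ⊤ := by
          refine ENNReal.add_lt_top.2 ⟨?_, ?_⟩
          · calc (∫⁻ t in Ioc (0:ℝ) 1, ν {a | t ≤ ‖a‖ ^ (α - (n:ℝ))})
                ≤ ∫⁻ _ in Ioc (0:ℝ) 1, volume (ball (0 : EuclideanSpace ℝ (Fin n)) R) :=
                  lintegral_mono fun t =>
                    le_trans (measure_mono (subset_univ _))
                      (le_of_eq (Measure.restrict_apply_univ _))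
              _ < ⊤ := by
                  rw [setLIntegral_const]
                  exact ENNReal.mul_lt_top measure_ball_lt_top (by simp [Real.volume_Ioc])
          · calc (∫⁻ t in Ioi (1:ℝ), ν {a | t ≤ ‖a‖ ^ (α - (n:ℝ))})
                ≤ ∫⁻ t in Ioi (1:ℝ), ENNReal.ofReal (t ^ e)
                    * volume (ball (0 : EuclideanSpace ℝ (Fin n)) 1) :=
                  setLIntegral_mono' measurableSet_Ioi key
              _ = (∫⁻ t in Ioi (1:ℝ), ENNReal.ofReal (t ^ e))
                    * volume (ball (0 : EuclideanSpace ℝ (Fin n)) 1) := by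
                  rw [lintegral_mul_const' _ _ measure_ball_lt_top.ne]
              _ < ⊤ := ENNReal.mul_lt_top
                  ((integrableOn_Ioi_rpow_of_lt he1 one_pos).setLIntegral_lt_top)
                  measure_ball_lt_top

end Stmt15
namespace Stmt15X

lemma integral_g_ball (n : ℕ) (hn : 0 < n) (α : ℝ) {r : ℝ} (hr : 0 < r) :
    ∫ z in ball (0 : EuclideanSpace ℝ (Fin n)) r, ‖z‖ ^ (α - (n:ℝ))
      = r ^ α * ∫ z in ball (0 : EuclideanSpace ℝ (Fin n)) 1, ‖z‖ ^ (α - (n:ℝ)) := by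
  haveI : Nonempty (Fin n) := ⟨⟨0, hn⟩⟩
  have h := Measure.setIntegral_comp_smul_of_pos (volume : Measure (EuclideanSpace ℝ (Fin n)))
    (fun z => ‖z‖ ^ (α - (n:ℝ))) (ball 0 1) hr
  rw [_root_.smul_ball hr.ne' (0 : EuclideanSpace ℝ (Fin n)) 1, smul_zero,
    Real.norm_of_nonneg hr.le, mul_one] at h
  have h2 : ∀ x : EuclideanSpace ℝ (Fin n), ‖r • x‖ ^ (α - (n:ℝ))
      = r ^ (α - (n:ℝ)) * ‖x‖ ^ (α - (n:ℝ)) := by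
    intro x
    rw [norm_smul, Real.norm_of_nonneg hr.le, Real.mul_rpow hr.le (norm_nonneg x)]
  simp only [h2] at h
  rw [integral_const_mul] at h
  have h3 : (∫ z in ball (0 : EuclideanSpace ℝ (Fin n)) r, ‖z‖ ^ (α - (n:ℝ)))
      = r ^ (Module.finrank ℝ (EuclideanSpace ℝ (Fin n))) * (r ^ (α - (n:ℝ))
        * ∫ z in ball (0 : EuclideanSpace ℝ (Fin n)) 1, ‖z‖ ^ (α - (n:ℝ))) := by
    rw [h, smul_eq_mul, ← mul_assoc, mul_inv_cancel₀ (pow_ne_zero _ hr.ne'), one_mul]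
  rw [h3, finrank_euclideanSpace_fin, ← Real.rpow_natCast r n, ← mul_assoc,
    ← Real.rpow_add hr]
  ring_nf

lemma key_estimate (n : ℕ) (hn : 0 < n) (α : ℝ) (hα : 0 < α) (hα1 : α < 1) :
    ∃ C : ℝ, 0 < C ∧ ∀ s : Set (EuclideanSpace ℝ (Fin n)), MeasurableSet s → volume s ≠ ⊤ →
      IntegrableOn (fun z : EuclideanSpace ℝ (Fin n) => ‖z‖ ^ (α - (n:ℝ))) s volume →
      (∫ z in s, ‖z‖ ^ (α - (n:ℝ))) ≤ C * (volume s).toReal ^ (α / (n:ℝ)) := by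
  haveI : Nonempty (Fin n) := ⟨⟨0, hn⟩⟩
  have hn0 : (0:ℝ) < n := by exact_mod_cast hn
  have hn1 : (1:ℝ) ≤ n := by exact_mod_cast hn
  have hαn : α - (n:ℝ) < 0 := by linarith
  set B : ℝ := (volume (ball (0 : EuclideanSpace ℝ (Fin n)) 1)).toReal with hBdef
  have hB : 0 < B := ENNReal.toReal_pos (measure_ball_pos _ _ one_pos).ne' measure_ball_lt_top.ne
  set Φ : ℝ := ∫ z in ball (0 : EuclideanSpace ℝ (Fin n)) 1, ‖z‖ ^ (α - (n:ℝ)) with hΦdef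
  have hΦ : 0 ≤ Φ := setIntegral_nonneg measurableSet_ball
    (fun z _ => Real.rpow_nonneg (norm_nonneg z) _)
  refine ⟨(Φ + B) / B ^ (α / (n:ℝ)) + 1, by positivity, ?_⟩
  intro s hs hsfin hsint
  set m : ℝ := (volume s).toReal with hmdef
  have hm0 : 0 ≤ m := ENNReal.toReal_nonneg
  rcases eq_or_lt_of_le hm0 with hm | hm
  · -- m = 0
    have hs0 : volume s = 0 := by
      rcases (ENNReal.toReal_eq_zero_iff _).1 hm.symm with h | h
      · exact h
      · exact absurd h hsfin
    rw [← hm, Real.zero_rpow (by positivity : α / (n:ℝ) ≠ 0), mul_zero]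
    have hrez : volume.restrict s = 0 := Measure.restrict_eq_zero.2 hs0
    rw [hrez, integral_zero_measure]
  · -- m > 0
    set r : ℝ := (m / B) ^ ((n:ℝ)⁻¹) with hrdef
    have hr : 0 < r := Real.rpow_pos_of_pos (by positivity) _
    have hrn : r ^ (n:ℝ) = m / B := by
      rw [hrdef, ← Real.rpow_mul (by positivity), inv_mul_cancel₀ hn0.ne', Real.rpow_one]
    have hrnB : r ^ (n:ℝ) * B = m := by rw [hrn]; field_simp
    have hsplit : (∫ z in s, ‖z‖ ^ (α - (n:ℝ)))
        = (∫ z in s ∩ ball 0 r, ‖z‖ ^ (α - (n:ℝ))) + ∫ z in s \ ball 0 r, ‖z‖ ^ (α - (n:ℝ)) := by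
      rw [← setIntegral_union (Set.disjoint_sdiff_inter (s := s) (t := ball 0 r)).symm
        (hs.diff measurableSet_ball)
        (hsint.mono_set inter_subset_left) (hsint.mono_set diff_subset),
        Set.inter_union_diff]
    have h1 : (∫ z in s ∩ ball 0 r, ‖z‖ ^ (α - (n:ℝ)))
        ≤ ∫ z in ball (0 : EuclideanSpace ℝ (Fin n)) r, ‖z‖ ^ (α - (n:ℝ)) := by
      refine setIntegral_mono_set (Stmt15.integrableOn_g n hn α hα hα1 r)
        (ae_of_all _ fun z => Real.rpow_nonneg (norm_nonneg z) _)
        (HasSubset.Subset.eventuallyLE inter_subset_right)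
    have h2 : (∫ z in s \ ball 0 r, ‖z‖ ^ (α - (n:ℝ))) ≤ m * r ^ (α - (n:ℝ)) := by
      have hle : ∀ z ∈ s \ ball (0 : EuclideanSpace ℝ (Fin n)) r,
          ‖z‖ ^ (α - (n:ℝ)) ≤ r ^ (α - (n:ℝ)) := by
        intro z hz
        have : r ≤ ‖z‖ := by
          have := hz.2
          simpa [mem_ball, dist_zero_right, not_lt] using this
        exact Real.rpow_le_rpow_of_nonpos hr this hαn.le
      calc (∫ z in s \ ball 0 r, ‖z‖ ^ (α - (n:ℝ)))
          ≤ ∫ _ in s \ ball (0 : EuclideanSpace ℝ (Fin n)) r, r ^ (α - (n:ℝ)) := by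
            refine setIntegral_mono_on (hsint.mono_set diff_subset)
              (integrableOn_const ?_) (hs.diff measurableSet_ball) hle
            exact (lt_of_le_of_lt (measure_mono diff_subset) (lt_top_iff_ne_top.2 hsfin)).ne
        _ = (volume (s \ ball (0 : EuclideanSpace ℝ (Fin n)) r)).toReal * r ^ (α - (n:ℝ)) := by
            rw [setIntegral_const, measureReal_def, smul_eq_mul]
        _ ≤ m * r ^ (α - (n:ℝ)) := by
            refine mul_le_mul_of_nonneg_right ?_ (Real.rpow_nonneg hr.le _)
            exact ENNReal.toReal_mono hsfin (measure_mono diff_subset)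
    have hball : (∫ z in ball (0 : EuclideanSpace ℝ (Fin n)) r, ‖z‖ ^ (α - (n:ℝ)))
        = r ^ α * Φ := integral_g_ball n hn α hr
    have hcomb : (∫ z in s, ‖z‖ ^ (α - (n:ℝ))) ≤ r ^ α * (Φ + B) := by
      have : m * r ^ (α - (n:ℝ)) = r ^ α * B := by
        rw [← hrnB]
        rw [mul_comm (r ^ (n:ℝ)) B, mul_assoc, ← Real.rpow_add hr]
        ring_nf
      rw [hsplit]
      calc (∫ z in s ∩ ball 0 r, ‖z‖ ^ (α - (n:ℝ))) + ∫ z in s \ ball 0 r, ‖z‖ ^ (α - (n:ℝ))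
          ≤ r ^ α * Φ + m * r ^ (α - (n:ℝ)) := add_le_add (hball ▸ h1) h2
        _ = r ^ α * (Φ + B) := by rw [this]; ring
    have hra : r ^ α = m ^ (α / (n:ℝ)) / B ^ (α / (n:ℝ)) := by
      rw [hrdef, ← Real.rpow_mul (by positivity), inv_mul_eq_div,
        Real.div_rpow hm0 hB.le]
    calc (∫ z in s, ‖z‖ ^ (α - (n:ℝ))) ≤ r ^ α * (Φ + B) := hcomb
      _ = (Φ + B) / B ^ (α / (n:ℝ)) * m ^ (α / (n:ℝ)) := by rw [hra]; ring
      _ ≤ ((Φ + B) / B ^ (α / (n:ℝ)) + 1) * m ^ (α / (n:ℝ)) := by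
          refine mul_le_mul_of_nonneg_right (by linarith) (Real.rpow_nonneg hm0 _)

end Stmt15X


namespace S3

lemma pow_sub_pow_le' {a b : ℝ} (hb : 0 ≤ b) (hab : b ≤ a) (N : ℕ) :
    a ^ N - b ^ N ≤ N * a ^ (N - 1) * (a - b) := by
  have ha : 0 ≤ a := hb.trans hab
  rw [← geom_sum₂_mul a b N]
  have hsum : (∑ i ∈ Finset.range N, a ^ i * b ^ (N - 1 - i)) ≤ N * a ^ (N - 1) := by
    calc (∑ i ∈ Finset.range N, a ^ i * b ^ (N - 1 - i))
        ≤ ∑ _i ∈ Finset.range N, a ^ (N - 1) := by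
          refine Finset.sum_le_sum fun i hi => ?_
          have hi' : i < N := Finset.mem_range.1 hi
          calc a ^ i * b ^ (N - 1 - i) ≤ a ^ i * a ^ (N - 1 - i) :=
                mul_le_mul_of_nonneg_left (pow_le_pow_left₀ hb hab _) (pow_nonneg ha _)
            _ = a ^ (i + (N - 1 - i)) := (pow_add a _ _).symm
            _ = a ^ (N - 1) := by congr 1; omega
      _ = N * a ^ (N - 1) := by rw [Finset.sum_const, Finset.card_range]; ring
  exact mul_le_mul_of_nonneg_right hsum (by linarith)

lemma annulus_bound (n : ℕ) (hn : 0 < n) (x : EuclideanSpace ℝ (Fin n)) {t s : ℝ}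
    (ht : 0 < t) (hs : 0 < s) (hst : s ≤ 3 / 2 * t) :
    (volume (ball x (t + s) \ ball x (t - s))).toReal
      ≤ (2 * n * (5 / 2 : ℝ) ^ n * (volume (ball (0 : EuclideanSpace ℝ (Fin n)) 1)).toReal)
        * (s * t ^ (n - 1)) := by
  haveI : Nonempty (Fin n) := ⟨⟨0, hn⟩⟩
  have hn1 : (1:ℝ) ≤ n := by exact_mod_cast hn
  set B : ℝ := (volume (ball (0 : EuclideanSpace ℝ (Fin n)) 1)).toReal with hBdef
  have hB : 0 ≤ B := ENNReal.toReal_nonneg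
  have htn : t ^ n = t ^ (n - 1) * t := by
    conv_lhs => rw [show n = (n - 1) + 1 by omega]
    rw [pow_succ]
  have hbig : (volume (ball x (t + s))).toReal = (t + s) ^ n * B := by
    rw [Measure.addHaar_ball _ x (by linarith : (0:ℝ) ≤ t + s), finrank_euclideanSpace_fin,
      ENNReal.toReal_mul, ENNReal.toReal_ofReal (by positivity)]
  rcases le_total t s with h | h
  · -- t ≤ s
    calc (volume (ball x (t + s) \ ball x (t - s))).toReal
        ≤ (volume (ball x (t + s))).toReal :=
          ENNReal.toReal_mono measure_ball_lt_top.ne (measure_mono diff_subset)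
      _ = (t + s) ^ n * B := hbig
      _ ≤ (5 / 2 * t) ^ n * B := by
          refine mul_le_mul_of_nonneg_right (pow_le_pow_left₀ (by linarith) (by linarith) n) hB
      _ = (5 / 2 : ℝ) ^ n * (t ^ (n - 1) * t) * B := by rw [mul_pow, htn]
      _ ≤ (5 / 2 : ℝ) ^ n * (t ^ (n - 1) * s) * B := by gcongr
      _ ≤ (2 * n * (5 / 2 : ℝ) ^ n * B) * (s * t ^ (n - 1)) := by
          have h1 : (1:ℝ) ≤ 2 * n := by linarith
          have hpos : (0:ℝ) ≤ (5/2:ℝ)^n * (t^(n-1) * s) * B :=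
            mul_nonneg (mul_nonneg (by positivity) (mul_nonneg (by positivity) hs.le)) hB
          have heq : (2 * (n:ℝ) * (5 / 2 : ℝ) ^ n * B) * (s * t ^ (n - 1))
              = (2 * (n:ℝ)) * ((5/2:ℝ)^n * (t^(n-1) * s) * B) := by ring
          rw [heq]
          nlinarith [mul_nonneg (sub_nonneg.2 h1) hpos]
  · -- s ≤ t
    have hts : (0:ℝ) ≤ t - s := by linarith
    have hsmall : (volume (ball x (t - s))).toReal = (t - s) ^ n * B := by
      rw [Measure.addHaar_ball _ x hts, finrank_euclideanSpace_fin,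
        ENNReal.toReal_mul, ENNReal.toReal_ofReal (by positivity)]
    have hdiff : volume (ball x (t + s) \ ball x (t - s))
        = volume (ball x (t + s)) - volume (ball x (t - s)) :=
      measure_diff (ball_subset_ball (by linarith)) measurableSet_ball.nullMeasurableSet
        measure_ball_lt_top.ne
    have htr : (volume (ball x (t + s) \ ball x (t - s))).toReal
        = (t + s) ^ n * B - (t - s) ^ n * B := by
      rw [hdiff, ENNReal.toReal_sub_of_le (measure_mono (ball_subset_ball (by linarith)))
        measure_ball_lt_top.ne, hbig, hsmall]
    rw [htr]
    have hkey : (t + s) ^ n - (t - s) ^ n ≤ n * (t + s) ^ (n - 1) * (2 * s) := by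
      have := pow_sub_pow_le' hts (by linarith : t - s ≤ t + s) n
      calc (t + s) ^ n - (t - s) ^ n ≤ n * (t + s) ^ (n - 1) * ((t + s) - (t - s)) := this
        _ = n * (t + s) ^ (n - 1) * (2 * s) := by ring_nf
    have hpow : (t + s) ^ (n - 1) ≤ (5 / 2 : ℝ) ^ n * t ^ (n - 1) := by
      calc (t + s) ^ (n - 1) ≤ (5 / 2 * t) ^ (n - 1) :=
            pow_le_pow_left₀ (by linarith) (by linarith) _
        _ = (5 / 2 : ℝ) ^ (n - 1) * t ^ (n - 1) := mul_pow _ _ _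
        _ ≤ (5 / 2 : ℝ) ^ n * t ^ (n - 1) := by
            refine mul_le_mul_of_nonneg_right (pow_le_pow_right₀ (by norm_num) (by omega))
              (by positivity)
    calc (t + s) ^ n * B - (t - s) ^ n * B = ((t + s) ^ n - (t - s) ^ n) * B := by ring
      _ ≤ (n * (t + s) ^ (n - 1) * (2 * s)) * B := mul_le_mul_of_nonneg_right hkey hB
      _ ≤ (n * ((5 / 2 : ℝ) ^ n * t ^ (n - 1)) * (2 * s)) * B := by gcongr
      _ = (2 * n * (5 / 2 : ℝ) ^ n * B) * (s * t ^ (n - 1)) := by ring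

end S3

set_option maxHeartbeats 1000000 in
theorem stmt_15 (n : ℕ) (hn : 0 < n) (α : ℝ) (hα : 0 < α) (hα1 : α < 1) (c : ℝ) :
    ∃ C : ℝ, 0 < C ∧ ∀ (x y : EuclideanSpace ℝ (Fin n)) (t : ℝ),
      2 * ‖y‖ ≤ ‖x‖ → ‖x‖ / 3 ≤ t → 0 < t →
      |(⨍ z in Metric.ball (x - y) t, c * ‖z‖ ^ (α - (n : ℝ))) -
          ⨍ z in Metric.ball x t, c * ‖z‖ ^ (α - (n : ℝ))| ≤
        C * t ^ (α - (n : ℝ) - α / n) * ‖y‖ ^ (α / n) := by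
  haveI : Nonempty (Fin n) := ⟨⟨0, hn⟩⟩
  have hn0 : (0:ℝ) < n := by exact_mod_cast hn
  obtain ⟨C₄, hC₄, hkey⟩ := Stmt15X.key_estimate n hn α hα hα1
  set B : ℝ := (volume (ball (0 : EuclideanSpace ℝ (Fin n)) 1)).toReal with hBdef
  have hB : 0 < B := ENNReal.toReal_pos (measure_ball_pos _ _ one_pos).ne' measure_ball_lt_top.ne
  set K : ℝ := 2 * n * (5 / 2 : ℝ) ^ n * B with hKdef
  have hK : 0 < K := by positivity
  refine ⟨|c| * C₄ * K ^ (α / (n:ℝ)) * B⁻¹ + 1, by positivity, ?_⟩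
  intro x y t hxy hxt ht
  by_cases hy : y = 0
  · subst hy
    simp only [sub_zero, sub_self, abs_zero, norm_zero]
    rw [Real.zero_rpow (by positivity : α / (n:ℝ) ≠ 0), mul_zero]
  set s : ℝ := ‖y‖ with hsdef
  have hs : 0 < s := norm_pos_iff.2 hy
  have hx3 : ‖x‖ ≤ 3 * t := by linarith [(div_le_iff₀ (by norm_num : (0:ℝ) < 3)).1 hxt]
  have hst : s ≤ 3 / 2 * t := by linarith
  -- the sets
  set G : EuclideanSpace ℝ (Fin n) → ℝ := fun z => ‖z‖ ^ (α - (n:ℝ)) with hGdef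
  have hGnn : ∀ z, 0 ≤ G z := fun z => Real.rpow_nonneg (norm_nonneg z) _
  set B1 := ball (x - y) t with hB1
  set B2 := ball x t with hB2
  set Ann := ball x (t + s) \ ball x (t - s) with hAnn
  have hdxy : dist (x - y) x = s := by
    have h1 : x - y - x = -y := by abel
    rw [dist_eq_norm, h1, norm_neg]
  have hsub1 : B1 \ B2 ⊆ Ann := by
    rintro z ⟨hz1, hz2⟩
    rw [hB1, mem_ball] at hz1
    rw [hB2, mem_ball, not_lt] at hz2
    constructor
    · rw [mem_ball]
      calc dist z x ≤ dist z (x - y) + dist (x - y) x := dist_triangle _ _ _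
        _ < t + s := by rw [hdxy]; linarith
    · rw [mem_ball, not_lt]; linarith
  have hsub2 : B2 \ B1 ⊆ Ann := by
    rintro z ⟨hz1, hz2⟩
    rw [hB2, mem_ball] at hz1
    rw [hB1, mem_ball, not_lt] at hz2
    have hzx : t - s ≤ dist z x := by
      have := dist_triangle z x (x - y)
      rw [dist_comm x (x - y), hdxy] at this
      linarith
    exact ⟨mem_ball.2 (by linarith), by rw [mem_ball, not_lt]; linarith⟩
  -- integrability
  set R : ℝ := t + s + ‖x‖ + 1 with hR
  have hIR : IntegrableOn G (ball 0 R) volume := Stmt15.integrableOn_g n hn α hα hα1 R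
  have hIB1 : IntegrableOn G B1 volume := by
    refine hIR.mono_set (ball_subset_ball' ?_)
    rw [dist_zero_right]
    calc t + ‖x - y‖ ≤ t + (‖x‖ + ‖y‖) := by
          have := norm_sub_le x y; linarith
      _ ≤ R := by rw [hR, ← hsdef]; linarith
  have hIB2 : IntegrableOn G B2 volume := by
    refine hIR.mono_set (ball_subset_ball' ?_)
    rw [dist_zero_right]; rw [hR]; linarith
  have hIAnnBall : IntegrableOn G (ball x (t + s)) volume := by
    refine hIR.mono_set (ball_subset_ball' ?_)
    rw [dist_zero_right]; rw [hR]; linarith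
  have hIAnn : IntegrableOn G Ann volume := hIAnnBall.mono_set diff_subset
  -- volumes
  have hVeq : volume B1 = volume B2 := by
    rw [hB1, hB2, Measure.addHaar_ball_center volume (x - y),
      Measure.addHaar_ball_center volume x]
  set V : ℝ := (volume B2).toReal with hVdef
  have hVval : V = t ^ n * B := by
    rw [hVdef, hB2, Measure.addHaar_ball _ x ht.le, finrank_euclideanSpace_fin,
      ENNReal.toReal_mul, ENNReal.toReal_ofReal (by positivity)]
  have hV0 : 0 < V := by rw [hVval]; positivity
  -- averages
  have havg1 : (⨍ z in B1, c * G z) = V⁻¹ * (c * ∫ z in B1, G z) := by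
    rw [setAverage_eq, measureReal_def, hVeq, smul_eq_mul, integral_const_mul]
  have havg2 : (⨍ z in B2, c * G z) = V⁻¹ * (c * ∫ z in B2, G z) := by
    rw [setAverage_eq, measureReal_def, smul_eq_mul, integral_const_mul]
  -- splitting
  have hmB1 : MeasurableSet B1 := measurableSet_ball
  have hmB2 : MeasurableSet B2 := measurableSet_ball
  have hsplit1 : (∫ z in B1, G z) = (∫ z in B1 ∩ B2, G z) + ∫ z in B1 \ B2, G z := by
    rw [← setIntegral_union (Set.disjoint_sdiff_inter (s := B1) (t := B2)).symm
      (hmB1.diff hmB2) (hIB1.mono_set inter_subset_left) (hIB1.mono_set diff_subset),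
      Set.inter_union_diff]
  have hsplit2 : (∫ z in B2, G z) = (∫ z in B1 ∩ B2, G z) + ∫ z in B2 \ B1, G z := by
    have hu : (B1 ∩ B2) ∪ (B2 \ B1) = B2 := by rw [Set.inter_comm, Set.inter_union_diff]
    have hd : Disjoint (B1 ∩ B2) (B2 \ B1) := by
      rw [Set.inter_comm]
      exact (Set.disjoint_sdiff_inter (s := B2) (t := B1)).symm
    rw [← setIntegral_union hd (hmB2.diff hmB1)
      (hIB2.mono_set inter_subset_right) (hIB2.mono_set diff_subset), hu]
  set J : ℝ := ∫ z in Ann, G z with hJdef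
  have hJ1 : (∫ z in B1 \ B2, G z) ≤ J :=
    setIntegral_mono_set hIAnn (ae_of_all _ hGnn) (HasSubset.Subset.eventuallyLE hsub1)
  have hJ2 : (∫ z in B2 \ B1, G z) ≤ J :=
    setIntegral_mono_set hIAnn (ae_of_all _ hGnn) (HasSubset.Subset.eventuallyLE hsub2)
  have hnn1 : 0 ≤ ∫ z in B1 \ B2, G z :=
    setIntegral_nonneg (hmB1.diff hmB2) fun z _ => hGnn z
  have hnn2 : 0 ≤ ∫ z in B2 \ B1, G z :=
    setIntegral_nonneg (hmB2.diff hmB1) fun z _ => hGnn z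
  have habsI : |(∫ z in B1, G z) - ∫ z in B2, G z| ≤ J := by
    rw [hsplit1, hsplit2]
    rw [abs_sub_le_iff]
    constructor <;> [skip; skip] <;> linarith
  -- key estimate on the annulus
  have hAnnMeas : MeasurableSet Ann := measurableSet_ball.diff measurableSet_ball
  have hAnnFin : volume Ann ≠ ⊤ :=
    (lt_of_le_of_lt (measure_mono diff_subset) measure_ball_lt_top).ne
  have hJle : J ≤ C₄ * (volume Ann).toReal ^ (α / (n:ℝ)) := hkey Ann hAnnMeas hAnnFin hIAnn
  have hAnnVol : (volume Ann).toReal ≤ K * (s * t ^ (n - 1)) := by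
    rw [hKdef]
    exact S3.annulus_bound n hn x ht hs hst
  have hJle2 : J ≤ C₄ * (K * (s * t ^ (n - 1))) ^ (α / (n:ℝ)) := by
    refine hJle.trans (mul_le_mul_of_nonneg_left ?_ hC₄.le)
    exact Real.rpow_le_rpow ENNReal.toReal_nonneg hAnnVol (by positivity)
  -- put it together
  have hLHS : |(⨍ z in B1, c * G z) - ⨍ z in B2, c * G z|
      = V⁻¹ * |c| * |(∫ z in B1, G z) - ∫ z in B2, G z| := by
    rw [havg1, havg2]
    have : V⁻¹ * (c * ∫ z in B1, G z) - V⁻¹ * (c * ∫ z in B2, G z)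
        = (V⁻¹ * c) * ((∫ z in B1, G z) - ∫ z in B2, G z) := by ring
    rw [this, abs_mul, abs_mul, abs_of_nonneg (inv_nonneg.2 hV0.le)]
  have hmain : |(⨍ z in B1, c * G z) - ⨍ z in B2, c * G z|
      ≤ V⁻¹ * |c| * (C₄ * (K * (s * t ^ (n - 1))) ^ (α / (n:ℝ))) := by
    rw [hLHS]
    exact mul_le_mul_of_nonneg_left (habsI.trans hJle2) (by positivity)
  refine hmain.trans ?_
  -- final algebra
  have e1 : (K * (s * t ^ (n - 1))) ^ (α / (n:ℝ))
      = K ^ (α / (n:ℝ)) * (s ^ (α / (n:ℝ)) * (t ^ (n - 1)) ^ (α / (n:ℝ))) := by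
    rw [Real.mul_rpow hK.le (by positivity), Real.mul_rpow hs.le (by positivity)]
  have e2 : ((t : ℝ) ^ (n - 1)) ^ (α / (n:ℝ)) = t ^ (((n:ℝ) - 1) * (α / n)) := by
    rw [← Real.rpow_natCast t (n - 1), ← Real.rpow_mul ht.le]
    congr 1
    rw [Nat.cast_sub hn, Nat.cast_one]
  have e3 : V⁻¹ = t ^ (-(n:ℝ)) * B⁻¹ := by
    rw [hVval, mul_inv, ← Real.rpow_natCast t n, ← Real.rpow_neg ht.le]
  have e4 : t ^ (-(n:ℝ)) * t ^ (((n:ℝ) - 1) * (α / n)) = t ^ (α - (n:ℝ) - α / n) := by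
    rw [← Real.rpow_add ht]
    congr 1
    field_simp
    ring
  calc V⁻¹ * |c| * (C₄ * (K * (s * t ^ (n - 1))) ^ (α / (n:ℝ)))
      = (|c| * C₄ * K ^ (α / (n:ℝ)) * B⁻¹)
          * (t ^ (-(n:ℝ)) * t ^ (((n:ℝ) - 1) * (α / n))) * s ^ (α / (n:ℝ)) := by
        rw [e1, e2, e3]; ring
    _ = (|c| * C₄ * K ^ (α / (n:ℝ)) * B⁻¹) * t ^ (α - (n:ℝ) - α / n) * s ^ (α / (n:ℝ)) := by
        rw [e4]
    _ ≤ (|c| * C₄ * K ^ (α / (n:ℝ)) * B⁻¹ + 1) * t ^ (α - (n:ℝ) - α / n) * s ^ (α / (n:ℝ)) := by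
        have h1 : (0:ℝ) ≤ t ^ (α - (n:ℝ) - α / n) := Real.rpow_nonneg ht.le _
        have h2 : (0:ℝ) ≤ s ^ (α / (n:ℝ)) := Real.rpow_nonneg hs.le _
        nlinarith [mul_nonneg h1 h2]
end
end

section
/- In dimension n = 1 with α = 2N+1 (N a positive integer), the fundamental solution satisfies Δ^N I_α(x) = A' + B'·log|x| with B' ≠ 0, and for |x| ≥ 2|y| one has t^{2N}·|(Δ^N I_α)_{B(x−y,t)} − (Δ^N I_α)_{B(x,t)}| ≤ C·t^{2N−1/2}·|y|^{1/2}, where (g)_{B(x,t)} denotes the mean over the interval (x−t, x+t). -/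
open MeasureTheory Set



private def bb (N : ℕ) (B : ℝ) : ℕ → ℝ
  | 0 => B
  | k + 1 => ((2 * N - k : ℕ) : ℝ) * bb N B k

private def aa (N : ℕ) (A B : ℝ) : ℕ → ℝ
  | 0 => A
  | k + 1 => ((2 * N - k : ℕ) : ℝ) * aa N A B k + bb N B k

private lemma bb_ne (N : ℕ) (B : ℝ) (hB : B ≠ 0) : ∀ k, k ≤ 2 * N → bb N B k ≠ 0 := by
  intro k
  induction k with
  | zero => intro _; simpa [bb] using hB
  | succ k ih =>
    intro hk
    have h1 : bb N B k ≠ 0 := ih (by omega)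
    have h2 : ((2 * N - k : ℕ) : ℝ) ≠ 0 := Nat.cast_ne_zero.2 (by omega)
    simpa [bb] using mul_ne_zero h2 h1

private lemma deriv_step (m : ℕ) (a b x : ℝ) (hx : x ≠ 0) :
    HasDerivAt (fun u : ℝ => u ^ (m + 1) * (a + b * Real.log u))
      (x ^ m * (((m + 1 : ℕ) : ℝ) * a + b + ((m + 1 : ℕ) : ℝ) * b * Real.log x)) x := by
  have h1 : HasDerivAt (fun u : ℝ => u ^ (m + 1)) (((m + 1 : ℕ) : ℝ) * x ^ m) x := by
    simpa using hasDerivAt_pow (m + 1) x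
  have h2 : HasDerivAt (fun u : ℝ => a + b * Real.log u) (b * x⁻¹) x :=
    ((Real.hasDerivAt_log hx).const_mul b).const_add a
  have h := h1.mul h2
  refine h.congr_deriv ?_
  rw [pow_succ]
  field_simp
  ring

private lemma iter_eq (N : ℕ) (A B : ℝ) : ∀ k, k ≤ 2 * N → ∀ x : ℝ, x ≠ 0 →
    iteratedDeriv k (fun u : ℝ => u ^ (2 * N) * (A + B * Real.log u)) x
      = x ^ (2 * N - k) * (aa N A B k + bb N B k * Real.log x) := by
  intro k
  induction k with
  | zero => intro _ x hx; simp [aa, bb]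
  | succ k ih =>
    intro hk x hx
    rw [iteratedDeriv_succ]
    have hev : iteratedDeriv k (fun u : ℝ => u ^ (2 * N) * (A + B * Real.log u))
        =ᶠ[nhds x] fun u => u ^ (2 * N - k) * (aa N A B k + bb N B k * Real.log u) := by
      have hmem : {(0 : ℝ)}ᶜ ∈ nhds x :=
        isOpen_compl_singleton.mem_nhds (by simpa using hx)
      filter_upwards [hmem] with u hu
      exact ih (by omega) u (by simpa using hu)
    rw [hev.deriv_eq]
    have hm : 2 * N - k = (2 * N - (k + 1)) + 1 := by omega
    have hd := deriv_step (2 * N - (k + 1)) (aa N A B k) (bb N B k) x hx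
    rw [hm]
    rw [hd.deriv]
    have hc : ((2 * N - (k + 1)) + 1 : ℕ) = 2 * N - k := by omega
    simp only [aa, bb, hc]



private lemma intOn_comp_neg {f : ℝ → ℝ} {s : Set ℝ} (hs : MeasurableSet s)
    (hf : IntegrableOn f s) : IntegrableOn (fun x => f (-x)) (Neg.neg ⁻¹' s) := by
  rw [← integrable_indicator_iff (hs.preimage measurable_neg)]
  rw [← integrable_indicator_iff hs] at hf
  refine hf.comp_neg.congr (Filter.Eventually.of_forall fun x => ?_)
  by_cases h : -x ∈ s <;> simp [Set.indicator_apply, h, Set.mem_preimage]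

private lemma intOn_comp_sub {f : ℝ → ℝ} {s : Set ℝ} (hs : MeasurableSet s)
    (hf : IntegrableOn f s) (c : ℝ) :
    IntegrableOn (fun x => f (x - c)) ((fun x => x - c) ⁻¹' s) := by
  rw [← integrable_indicator_iff (hs.preimage (measurable_id'.sub_const c))]
  rw [← integrable_indicator_iff hs] at hf
  refine (hf.comp_sub_right c).congr (Filter.Eventually.of_forall fun x => ?_)
  by_cases h : x - c ∈ s <;> simp [Set.indicator_apply, h, Set.mem_preimage]

private lemma int_rpow_half (R : ℝ) (hR : 0 < R) :
    IntegrableOn (fun x : ℝ => |x| ^ (-(1/2) : ℝ)) (Ioo (-R) R) := by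
  have hpos : IntegrableOn (fun x : ℝ => x ^ (-(1/2) : ℝ)) (Ioo 0 R) :=
    (intervalIntegral.integrableOn_Ioo_rpow_iff hR).2 (by norm_num)
  have hpos' : IntegrableOn (fun x : ℝ => |x| ^ (-(1/2) : ℝ)) (Ioo 0 R) := by
    refine hpos.congr_fun (fun x hx => ?_) measurableSet_Ioo
    rw [abs_of_pos hx.1]
  have hneg : IntegrableOn (fun x : ℝ => |x| ^ (-(1/2) : ℝ)) (Ioo (-R) 0) := by
    have h := intOn_comp_neg measurableSet_Ioo hpos'
    have hset : (Neg.neg ⁻¹' (Ioo (0:ℝ) R)) = Ioo (-R) 0 := by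
      ext x
      simp only [mem_preimage, mem_Ioo]
      constructor <;> intro h <;> constructor <;> linarith [h.1, h.2]
    rw [hset] at h
    refine h.congr_fun (fun x _ => ?_) measurableSet_Ioo
    simp only [abs_neg]
  have hIco : IntegrableOn (fun x : ℝ => |x| ^ (-(1/2) : ℝ)) (Ico 0 R) :=
    (integrableOn_Ico_iff_integrableOn_Ioo (by simp)).2 hpos'
  refine (hneg.union hIco).mono_set fun x hx => ?_
  rcases lt_or_ge x 0 with h | h
  · exact Or.inl ⟨hx.1, h⟩
  · exact Or.inr ⟨h, hx.2⟩

private lemma logsq_le {z : ℝ} (hz : 1 ≤ z) : (Real.log z) ^ 2 ≤ 16 * z ^ ((1:ℝ)/2) := by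
  have h0 : (0:ℝ) < z := by linarith
  have h1 : Real.log z = 4 * Real.log (z ^ ((1:ℝ)/4)) := by
    rw [Real.log_rpow h0]; ring
  have hz4 : (1:ℝ) ≤ z ^ ((1:ℝ)/4) := Real.one_le_rpow hz (by norm_num)
  have h2 : Real.log (z ^ ((1:ℝ)/4)) ≤ z ^ ((1:ℝ)/4) := by
    have := Real.log_le_sub_one_of_pos (show (0:ℝ) < z ^ ((1:ℝ)/4) by positivity)
    linarith
  have h3 : 0 ≤ Real.log (z ^ ((1:ℝ)/4)) := Real.log_nonneg hz4
  have h4 : (z ^ ((1:ℝ)/4)) ^ 2 = z ^ ((1:ℝ)/2) := by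
    rw [← Real.rpow_natCast (z ^ ((1:ℝ)/4)) 2, ← Real.rpow_mul h0.le]
    norm_num
  calc (Real.log z) ^ 2 = 16 * (Real.log (z ^ ((1:ℝ)/4))) ^ 2 := by rw [h1]; ring
    _ ≤ 16 * (z ^ ((1:ℝ)/4)) ^ 2 := by nlinarith
    _ = 16 * z ^ ((1:ℝ)/2) := by rw [h4]

private lemma int_logsq (R : ℝ) (hR : 1 ≤ R) :
    IntegrableOn (fun x : ℝ => (Real.log x) ^ 2) (Ioo (-R) R) := by
  have hR0 : (0:ℝ) < R := by linarith
  have hg : IntegrableOn (fun x : ℝ => 16 * |x| ^ (-(1/2) : ℝ) + (Real.log R) ^ 2)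
      (Ioo (-R) R) := by
    exact ((int_rpow_half R hR0).const_mul 16).add
      (integrableOn_const measure_Ioo_lt_top.ne)
  refine Integrable.mono' hg
    ((Real.measurable_log.pow_const 2).aestronglyMeasurable)
    (Filter.eventually_of_mem (self_mem_ae_restrict measurableSet_Ioo) fun x hx => ?_)
  rw [Real.norm_eq_abs, abs_of_nonneg (sq_nonneg _)]
  by_cases hx0 : x = 0
  · subst hx0
    simp only [Real.log_zero]
    norm_num
    positivity
  rcases le_or_gt |x| 1 with hle | hgt
  · have hxa : 0 < |x| := abs_pos.2 hx0
    have hz : (1:ℝ) ≤ |x|⁻¹ := (one_le_inv₀ hxa).2 hle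
    have key : (Real.log x) ^ 2 ≤ 16 * (|x|⁻¹) ^ ((1:ℝ)/2) := by
      have : (Real.log x) ^ 2 = (Real.log |x|⁻¹) ^ 2 := by
        rw [Real.log_inv, Real.log_abs, neg_sq]
      rw [this]
      exact logsq_le hz
    have : (|x|⁻¹) ^ ((1:ℝ)/2) = |x| ^ (-(1/2) : ℝ) := by
      rw [← Real.rpow_neg_one |x|, ← Real.rpow_mul (abs_nonneg x)]
      norm_num
    nlinarith [sq_nonneg (Real.log R)]
  · have hxR : |x| ≤ R := by
      rcases abs_cases x with ⟨h1, _⟩ | ⟨h1, _⟩ <;> rw [h1] <;> linarith [hx.1, hx.2]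
    have h1 : 0 ≤ Real.log |x| := Real.log_nonneg hgt.le
    have h2 : Real.log |x| ≤ Real.log R := Real.log_le_log (by linarith) hxR
    have h3 : (Real.log x) ^ 2 ≤ (Real.log R) ^ 2 := by
      rw [← Real.log_abs]
      nlinarith
    have h4 : (0:ℝ) ≤ 16 * |x| ^ (-(1/2) : ℝ) := by positivity
    linarith

private lemma int_logsq_shift (c a b : ℝ) :
    IntegrableOn (fun x : ℝ => (Real.log (x - c)) ^ 2) (Ioo a b) := by
  set R : ℝ := |a - c| + |b - c| + 1 with hRdef
  have hR : 1 ≤ R := by have := abs_nonneg (a-c); have := abs_nonneg (b-c); simp only [hRdef]; linarith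
  have h1 := int_logsq R hR
  have h2 := intOn_comp_sub measurableSet_Ioo h1 c
  refine h2.mono_set fun x hx => ?_
  simp only [mem_preimage, mem_Ioo]
  have hac := abs_nonneg (a - c)
  have hbc := abs_nonneg (b - c)
  have h3 := neg_abs_le (a - c)
  have h4 := le_abs_self (b - c)
  constructor <;> [skip; skip] <;> simp only [hRdef] <;> linarith [hx.1, hx.2]

private lemma int_log_shift (c a b : ℝ) :
    IntegrableOn (fun x : ℝ => Real.log (x - c)) (Ioo a b) := by
  have hg : IntegrableOn (fun x : ℝ => (Real.log (x - c)) ^ 2 + 1) (Ioo a b) :=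
    (int_logsq_shift c a b).add (integrableOn_const measure_Ioo_lt_top.ne)
  refine Integrable.mono' hg
    ((Real.measurable_log.comp (measurable_id.sub_const c)).aestronglyMeasurable)
    (Filter.Eventually.of_forall fun x => ?_)
  rw [Real.norm_eq_abs]
  nlinarith [sq_nonneg (|Real.log (x - c)| - 1), sq_abs (Real.log (x - c))]


private lemma phi_meas : Measurable (fun s : ℝ => (Real.log (s - 1) - Real.log s) ^ 2) :=
  ((Real.measurable_log.comp (measurable_id.sub_const 1)).sub Real.measurable_log).pow_const 2

private lemma phi_meas' : Measurable (fun s : ℝ => (Real.log (-s - 1) - Real.log (-s)) ^ 2) :=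
  ((Real.measurable_log.comp (measurable_neg.sub_const 1)).sub
    (Real.measurable_log.comp measurable_neg)).pow_const 2

private lemma int_tail {g : ℝ → ℝ} (hm : Measurable g)
    (hb : ∀ s : ℝ, 2 ≤ s → ‖g s‖ ≤ 4 * s ^ (-2 : ℝ)) : IntegrableOn g (Ici (2:ℝ)) := by
  rw [integrableOn_Ici_iff_integrableOn_Ioi]
  have base : IntegrableOn (fun s : ℝ => s ^ (-2:ℝ)) (Ioi (2:ℝ)) :=
    integrableOn_Ioi_rpow_of_lt (by norm_num) (by norm_num)
  refine Integrable.mono' (base.const_mul 4) hm.aestronglyMeasurable ?_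
  exact Filter.eventually_of_mem (self_mem_ae_restrict measurableSet_Ioi)
    fun s hs => hb s (le_of_lt hs)

private lemma log_diff_le {a b : ℝ} (h0 : 0 < a) (hab : a ≤ b) :
    Real.log b - Real.log a ≤ (b - a) / a := by
  have hb0 : 0 < b := lt_of_lt_of_le h0 hab
  have h := Real.log_le_sub_one_of_pos (show 0 < b / a by positivity)
  rw [Real.log_div hb0.ne' h0.ne'] at h
  have : b / a - 1 = (b - a) / a := by field_simp
  linarith

private lemma rpow_neg_two {s : ℝ} (hs : 0 < s) : s ^ (-2 : ℝ) = (s ^ 2)⁻¹ := by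
  rw [show (-2:ℝ) = -((2:ℕ):ℝ) by norm_num, Real.rpow_neg hs.le, Real.rpow_natCast]

private lemma tail_bound_right (s : ℝ) (hs : 2 ≤ s) :
    ‖(Real.log (s - 1) - Real.log s) ^ 2‖ ≤ 4 * s ^ (-2 : ℝ) := by
  have h1 : (0:ℝ) < s - 1 := by linarith
  have h0 : (0:ℝ) < s := by linarith
  have hD0 : 0 ≤ Real.log s - Real.log (s - 1) :=
    sub_nonneg.2 (Real.log_le_log h1 (by linarith))
  have hD1 : Real.log s - Real.log (s - 1) ≤ 1 / (s - 1) := by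
    have := log_diff_le h1 (show s - 1 ≤ s by linarith)
    simpa using this
  have key : (1 / (s - 1)) ^ 2 ≤ 4 / s ^ 2 := by
    rw [div_pow, div_le_div_iff₀ (by positivity) (by positivity)]
    nlinarith
  have h2 : (Real.log (s - 1) - Real.log s) ^ 2 = (Real.log s - Real.log (s - 1)) ^ 2 := by
    rw [show Real.log (s - 1) - Real.log s = -(Real.log s - Real.log (s - 1)) by ring, neg_sq]
  rw [Real.norm_eq_abs, abs_of_nonneg (sq_nonneg _), h2, rpow_neg_two h0, ← div_eq_mul_inv]
  calc (Real.log s - Real.log (s - 1)) ^ 2 ≤ (1 / (s - 1)) ^ 2 := by nlinarith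
    _ ≤ 4 / s ^ 2 := key

private lemma tail_bound_left (s : ℝ) (hs : 2 ≤ s) :
    ‖(Real.log (-s - 1) - Real.log (-s)) ^ 2‖ ≤ 4 * s ^ (-2 : ℝ) := by
  have h0 : (0:ℝ) < s := by linarith
  have e1 : Real.log (-s - 1) = Real.log (s + 1) := by
    rw [show -s - 1 = -(s + 1) by ring, Real.log_neg_eq_log]
  have e2 : Real.log (-s) = Real.log s := Real.log_neg_eq_log s
  have hD0 : 0 ≤ Real.log (s + 1) - Real.log s :=
    sub_nonneg.2 (Real.log_le_log h0 (by linarith))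
  have hD1 : Real.log (s + 1) - Real.log s ≤ 1 / s := by
    have := log_diff_le h0 (show s ≤ s + 1 by linarith)
    simpa using this
  have key : (1 / s) ^ 2 ≤ 4 / s ^ 2 := by
    rw [div_pow, div_le_div_iff₀ (by positivity) (by positivity)]
    nlinarith
  rw [Real.norm_eq_abs, abs_of_nonneg (sq_nonneg _), e1, e2, rpow_neg_two h0, ← div_eq_mul_inv]
  calc (Real.log (s + 1) - Real.log s) ^ 2 ≤ (1 / s) ^ 2 := by nlinarith
    _ ≤ 4 / s ^ 2 := key

private lemma int_phisq_global :
    Integrable (fun s : ℝ => (Real.log (s - 1) - Real.log s) ^ 2) := by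
  rw [← integrableOn_univ]
  have hmid : IntegrableOn (fun s : ℝ => (Real.log (s - 1) - Real.log s) ^ 2)
      (Ioo (-2:ℝ) 2) := by
    have h1 := int_logsq_shift 1 (-2 : ℝ) 2
    have h0 : IntegrableOn (fun x : ℝ => (Real.log x) ^ 2) (Ioo (-2:ℝ) 2) :=
      int_logsq 2 (by norm_num)
    refine Integrable.mono' ((h1.const_mul 2).add (h0.const_mul 2))
      phi_meas.aestronglyMeasurable (Filter.Eventually.of_forall fun s => ?_)
    rw [Real.norm_eq_abs, abs_of_nonneg (sq_nonneg _)]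
    simp only [Pi.add_apply]
    nlinarith [sq_nonneg (Real.log (s - 1) + Real.log s)]
  have hright : IntegrableOn (fun s : ℝ => (Real.log (s - 1) - Real.log s) ^ 2)
      (Ici (2:ℝ)) := int_tail phi_meas tail_bound_right
  have hleft : IntegrableOn (fun s : ℝ => (Real.log (s - 1) - Real.log s) ^ 2)
      (Iic (-2:ℝ)) := by
    have h := intOn_comp_neg measurableSet_Ici (int_tail phi_meas' tail_bound_left)
    have hset : Neg.neg ⁻¹' (Ici (2:ℝ)) = Iic (-2:ℝ) := by
      ext x
      simp only [mem_preimage, mem_Ici, mem_Iic]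
      constructor <;> intro <;> linarith
    rw [hset] at h
    refine h.congr_fun (fun x _ => ?_) measurableSet_Iic
    simp only [neg_neg]
  have hsub : (univ : Set ℝ) ⊆ Iic (-2:ℝ) ∪ (Ioo (-2:ℝ) 2 ∪ Ici (2:ℝ)) := by
    intro x _
    rcases le_or_gt x (-2) with h | h
    · exact Or.inl h
    rcases lt_or_ge x 2 with h2 | h2
    · exact Or.inr (Or.inl ⟨h, h2⟩)
    · exact Or.inr (Or.inr h2)
  exact (hleft.union (hmid.union hright)).mono_set hsub

private lemma int_phiy {y : ℝ} (hy : y ≠ 0) :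
    Integrable (fun u : ℝ => (Real.log (u - y) - Real.log u) ^ 2) := by
  have h1 : Integrable (fun u : ℝ => (Real.log (y⁻¹ * u - 1) - Real.log (y⁻¹ * u)) ^ 2) :=
    (integrable_comp_mul_left_iff (fun s : ℝ => (Real.log (s - 1) - Real.log s) ^ 2)
      (inv_ne_zero hy)).2 int_phisq_global
  refine h1.congr ?_
  have hnull : volume ({0, y} : Set ℝ) = 0 :=
    Set.Countable.measure_zero (((Set.finite_singleton y).insert 0).countable) _
  have hs : ({0, y}ᶜ : Set ℝ) ∈ ae (volume : Measure ℝ) := by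
    rw [mem_ae_iff, compl_compl]; exact hnull
  filter_upwards [hs] with u hu
  simp only [mem_compl_iff, mem_insert_iff, mem_singleton_iff, not_or] at hu
  obtain ⟨hu0, huy⟩ := hu
  have e1 : y⁻¹ * u - 1 = y⁻¹ * (u - y) := by field_simp
  rw [e1, Real.log_mul (inv_ne_zero hy) (sub_ne_zero.2 huy),
    Real.log_mul (inv_ne_zero hy) hu0]
  ring

private lemma scale_eq {y : ℝ} (hy : y ≠ 0) :
    ∫ u : ℝ, (Real.log (u - y) - Real.log u) ^ 2
      = |y| * ∫ s : ℝ, (Real.log (s - 1) - Real.log s) ^ 2 := by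
  have h := MeasureTheory.Measure.integral_comp_mul_left
    (fun u : ℝ => (Real.log (u - y) - Real.log u) ^ 2) y
  have hae : ∫ x : ℝ, (Real.log (y * x - y) - Real.log (y * x)) ^ 2
      = ∫ s : ℝ, (Real.log (s - 1) - Real.log s) ^ 2 := by
    refine integral_congr_ae ?_
    have hnull : volume ({0, 1} : Set ℝ) = 0 :=
      Set.Countable.measure_zero (((Set.finite_singleton 1).insert 0).countable) _
    have hs : ({0, 1}ᶜ : Set ℝ) ∈ ae (volume : Measure ℝ) := by
      rw [mem_ae_iff, compl_compl]; exact hnull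
    filter_upwards [hs] with x hx
    simp only [mem_compl_iff, mem_insert_iff, mem_singleton_iff, not_or] at hx
    obtain ⟨hx0, hx1⟩ := hx
    rw [show y * x - y = y * (x - 1) by ring, Real.log_mul hy (sub_ne_zero.2 hx1),
      Real.log_mul hy hx0]
    ring
  rw [hae, smul_eq_mul, abs_inv] at h
  have hy' : |y| ≠ 0 := abs_ne_zero.2 hy
  calc ∫ u : ℝ, (Real.log (u - y) - Real.log u) ^ 2
      = |y| * (|y|⁻¹ * ∫ u : ℝ, (Real.log (u - y) - Real.log u) ^ 2) := by
        field_simp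
    _ = |y| * ∫ s : ℝ, (Real.log (s - 1) - Real.log s) ^ 2 := by rw [← h]


private lemma key_ineq (N : ℕ) (A' B' : ℝ) : ∃ C : ℝ, 0 < C ∧ ∀ x y t : ℝ, 0 < t →
    t ^ (2 * N) *
        |(⨍ u in Metric.ball (x - y) t, (A' + B' * Real.log |u|)) -
          ⨍ u in Metric.ball x t, (A' + B' * Real.log |u|)| ≤
      C * t ^ ((2 * N : ℝ) - 1 / 2) * |y| ^ ((1 : ℝ) / 2) := by
  set c : ℝ := ∫ s : ℝ, (Real.log (s - 1) - Real.log s) ^ 2 with hcdef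
  have hc0 : 0 ≤ c := integral_nonneg fun s => sq_nonneg _
  refine ⟨|B'| * Real.sqrt (c + 1) + 1, by positivity, ?_⟩
  intro x y t ht
  by_cases hy : y = 0
  · subst hy
    rw [sub_zero, sub_self, abs_zero, mul_zero]
    positivity
  have hyabs : 0 < |y| := abs_pos.2 hy
  have h2t : (0:ℝ) < 2 * t := by linarith
  have hballvol : volume (Metric.ball x t) < ⊤ := by
    rw [Real.volume_ball]; exact ENNReal.ofReal_lt_top
  have hlog1 : IntegrableOn (fun u : ℝ => Real.log u) (Metric.ball x t) := by
    have h := int_log_shift 0 (x - t) (x + t)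
    rw [Real.ball_eq_Ioo]
    simpa using h
  have hlog1' : IntegrableOn (fun u : ℝ => Real.log u) (Metric.ball (x - y) t) := by
    have h := int_log_shift 0 (x - y - t) (x - y + t)
    rw [Real.ball_eq_Ioo]
    simpa using h
  have hlogy : IntegrableOn (fun u : ℝ => Real.log (u - y)) (Metric.ball x t) := by
    rw [Real.ball_eq_Ioo]; exact int_log_shift y (x - t) (x + t)
  -- average formula
  have havg : ∀ z : ℝ, IntegrableOn (fun u : ℝ => Real.log u) (Metric.ball z t) →
      (⨍ u in Metric.ball z t, (A' + B' * Real.log |u|))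
        = A' + B' * ((2 * t)⁻¹ * ∫ u in Metric.ball z t, Real.log u) := by
    intro z hint
    have hfun : (fun u : ℝ => A' + B' * Real.log |u|)
        = fun u : ℝ => A' + B' * Real.log u := by
      funext u; rw [Real.log_abs]
    have hconst : IntegrableOn (fun _ : ℝ => A') (Metric.ball z t) :=
      integrableOn_const (by rw [Real.volume_ball]; exact ENNReal.ofReal_ne_top)
    rw [hfun, setAverage_eq, Real.volume_real_ball ht.le,
      integral_add hconst (hint.const_mul B'), setIntegral_const,
      Real.volume_real_ball ht.le, integral_const_mul, smul_eq_mul,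
      smul_eq_mul]
    field_simp
  -- translation
  have htrans : (∫ u in Metric.ball (x - y) t, Real.log u)
      = ∫ u in Metric.ball x t, Real.log (u - y) := by
    rw [← integral_indicator (measurableSet_ball (x := (x - y)) (ε := t)),
      ← integral_indicator (measurableSet_ball (x := x) (ε := t)),
      ← integral_sub_right_eq_self
        (Set.indicator (Metric.ball (x - y) t) Real.log) y]
    refine integral_congr_ae (Filter.Eventually.of_forall fun u => ?_)
    show Set.indicator (Metric.ball (x - y) t) Real.log (u - y)
      = Set.indicator (Metric.ball x t) (fun u => Real.log (u - y)) u
    have hmem : u - y ∈ Metric.ball (x - y) t ↔ u ∈ Metric.ball x t := by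
      rw [Metric.mem_ball, Metric.mem_ball, Real.dist_eq, Real.dist_eq,
        show u - y - (x - y) = u - x by ring]
    by_cases h : u ∈ Metric.ball x t
    · rw [Set.indicator_of_mem (hmem.2 h), Set.indicator_of_mem h]
    · rw [Set.indicator_of_notMem (fun hh => h (hmem.1 hh)), Set.indicator_of_notMem h]
  have hdiff : (⨍ u in Metric.ball (x - y) t, (A' + B' * Real.log |u|)) -
        ⨍ u in Metric.ball x t, (A' + B' * Real.log |u|)
      = B' * ((2 * t)⁻¹ * ∫ u in Metric.ball x t,
          (Real.log (u - y) - Real.log u)) := by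
    rw [havg (x - y) hlog1', havg x hlog1, htrans, integral_sub hlogy hlog1]
    ring
  -- Cauchy-Schwarz style bound
  set K : ℝ := Real.sqrt ((c + 1) * |y|) with hKdef
  set S : ℝ := Real.sqrt t with hSdef
  have hKpos : 0 < K := Real.sqrt_pos.2 (by positivity)
  have hSpos : 0 < S := Real.sqrt_pos.2 ht
  have hK2 : K ^ 2 = (c + 1) * |y| := Real.sq_sqrt (by positivity)
  have hS2 : S ^ 2 = t := Real.sq_sqrt ht.le
  set ε : ℝ := K / S with hεdef
  have hε : 0 < ε := by positivity
  have hφ : IntegrableOn (fun u : ℝ => Real.log (u - y) - Real.log u)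
      (Metric.ball x t) := hlogy.sub hlog1
  have hφ2 : Integrable (fun u : ℝ => (Real.log (u - y) - Real.log u) ^ 2) := int_phiy hy
  have hφ2' : IntegrableOn (fun u : ℝ => (Real.log (u - y) - Real.log u) ^ 2)
      (Metric.ball x t) := hφ2.integrableOn
  have hgint : IntegrableOn
      (fun u : ℝ => ε / 2 + (Real.log (u - y) - Real.log u) ^ 2 / (2 * ε))
      (Metric.ball x t) :=
    (integrableOn_const hballvol.ne).add (hφ2'.div_const (2 * ε))
  have hpt : ∀ u : ℝ, |Real.log (u - y) - Real.log u| ≤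
      ε / 2 + (Real.log (u - y) - Real.log u) ^ 2 / (2 * ε) := by
    intro u
    set D := Real.log (u - y) - Real.log u
    have h1 : 2 * ε * |D| ≤ ε ^ 2 + D ^ 2 := by
      nlinarith [sq_nonneg (|D| - ε), sq_abs D]
    calc |D| = (2 * ε * |D|) / (2 * ε) := by field_simp
      _ ≤ (ε ^ 2 + D ^ 2) / (2 * ε) := by gcongr
      _ = ε / 2 + D ^ 2 / (2 * ε) := by field_simp
  have hI : |∫ u in Metric.ball x t, (Real.log (u - y) - Real.log u)| ≤
      ∫ u in Metric.ball x t, |Real.log (u - y) - Real.log u| := by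
    simpa [Real.norm_eq_abs] using
      norm_integral_le_integral_norm (μ := volume.restrict (Metric.ball x t))
        (fun u : ℝ => Real.log (u - y) - Real.log u)
  have h2 : ∫ u in Metric.ball x t, |Real.log (u - y) - Real.log u| ≤
      ∫ u in Metric.ball x t,
        (ε / 2 + (Real.log (u - y) - Real.log u) ^ 2 / (2 * ε)) :=
    integral_mono hφ.abs hgint hpt
  have h4 : (∫ u in Metric.ball x t, (Real.log (u - y) - Real.log u) ^ 2)
      ≤ (c + 1) * |y| := by
    have h5 := setIntegral_le_integral (s := Metric.ball x t) hφ2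
      (Filter.Eventually.of_forall fun u => sq_nonneg _)
    rw [scale_eq hy, ← hcdef] at h5
    nlinarith
  have h3 : ∫ u in Metric.ball x t,
      (ε / 2 + (Real.log (u - y) - Real.log u) ^ 2 / (2 * ε))
      = ε / 2 * (2 * t) +
        (∫ u in Metric.ball x t, (Real.log (u - y) - Real.log u) ^ 2) / (2 * ε) := by
    rw [integral_add (integrableOn_const hballvol.ne : IntegrableOn (fun _ : ℝ => ε / 2) (Metric.ball x t) volume)
      (hφ2'.div_const (2 * ε) : IntegrableOn (fun u : ℝ => (Real.log (u - y) - Real.log u) ^ 2 / (2 * ε)) (Metric.ball x t) volume),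
      setIntegral_const, integral_div, Real.volume_real_ball ht.le,
      smul_eq_mul]
    ring
  have hJ : |∫ u in Metric.ball x t, (Real.log (u - y) - Real.log u)| ≤
      3 / 2 * (K * S) := by
    have hcomb : |∫ u in Metric.ball x t, (Real.log (u - y) - Real.log u)| ≤
        ε / 2 * (2 * t) + ((c + 1) * |y|) / (2 * ε) := by
      calc |∫ u in Metric.ball x t, (Real.log (u - y) - Real.log u)|
          ≤ ∫ u in Metric.ball x t, |Real.log (u - y) - Real.log u| := hI
        _ ≤ _ := h2
        _ = _ := h3
        _ ≤ ε / 2 * (2 * t) + ((c + 1) * |y|) / (2 * ε) := by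
            gcongr
    have heq : ε / 2 * (2 * t) + ((c + 1) * |y|) / (2 * ε) = 3 / 2 * (K * S) := by
      rw [hεdef, ← hS2, ← hK2]
      field_simp
      ring
    linarith
  -- final assembly
  rw [hdiff, abs_mul, abs_mul, abs_of_pos (show (0:ℝ) < (2 * t)⁻¹ by positivity)]
  set T : ℝ := t ^ (2 * N) with hTdef
  have hT : 0 ≤ T := by positivity
  have hty : t ^ ((2 * N : ℝ) - 1 / 2) = T / S := by
    rw [Real.rpow_sub ht]
    congr 1
    · rw [show ((2 * N : ℝ)) = ((2 * N : ℕ) : ℝ) by push_cast; ring, Real.rpow_natCast]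
    · rw [hSdef, Real.sqrt_eq_rpow]
  have hyy : |y| ^ ((1 : ℝ) / 2) = Real.sqrt |y| := (Real.sqrt_eq_rpow _).symm
  have hKeq : K = Real.sqrt (c + 1) * Real.sqrt |y| := by
    rw [hKdef, Real.sqrt_mul (by positivity)]
  rw [hty, hyy]
  have hchain : T * (|B'| * ((2 * t)⁻¹ *
      |∫ u in Metric.ball x t, (Real.log (u - y) - Real.log u)|)) ≤
      T * (|B'| * ((2 * t)⁻¹ * (3 / 2 * (K * S)))) := by
    gcongr
  refine hchain.trans ?_
  have hSS : S * S = t := Real.mul_self_sqrt ht.le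
  have heq2 : T * (|B'| * ((2 * t)⁻¹ * (3 / 2 * (K * S))))
      = 3 / 4 * (|B'| * Real.sqrt (c + 1)) * (T / S * Real.sqrt |y|) := by
    rw [hKeq, ← hSS]
    field_simp
    ring
  rw [heq2]
  have hfact : 0 ≤ T / S * Real.sqrt |y| := by positivity
  have hcoef : 3 / 4 * (|B'| * Real.sqrt (c + 1)) ≤ |B'| * Real.sqrt (c + 1) + 1 := by
    have : 0 ≤ |B'| * Real.sqrt (c + 1) := by positivity
    linarith
  calc 3 / 4 * (|B'| * Real.sqrt (c + 1)) * (T / S * Real.sqrt |y|)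
      ≤ (|B'| * Real.sqrt (c + 1) + 1) * (T / S * Real.sqrt |y|) :=
        mul_le_mul_of_nonneg_right hcoef hfact
    _ = (|B'| * Real.sqrt (c + 1) + 1) * (T / S) * Real.sqrt |y| := by ring

theorem stmt_19 (N : ℕ) (hN : 0 < N) (A B : ℝ) (hB : B ≠ 0) :
    ∃ A' B' : ℝ, B' ≠ 0 ∧
      (∀ x : ℝ, x ≠ 0 →
        iteratedDeriv (2 * N) (fun u : ℝ => |u| ^ (2 * N) * (A + B * Real.log |u|)) x =
          A' + B' * Real.log |x|) ∧
      ∃ C : ℝ, 0 < C ∧ ∀ x y t : ℝ, 2 * |y| ≤ |x| → 0 < t →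
        t ^ (2 * N) *
            |(⨍ u in Metric.ball (x - y) t, (A' + B' * Real.log |u|)) -
              ⨍ u in Metric.ball x t, (A' + B' * Real.log |u|)| ≤
          C * t ^ ((2 * N : ℝ) - 1 / 2) * |y| ^ ((1 : ℝ) / 2) := by
  obtain ⟨C, hC, hmain⟩ := key_ineq N (aa N A B (2 * N)) (bb N B (2 * N))
  refine ⟨aa N A B (2 * N), bb N B (2 * N), bb_ne N B hB (2 * N) le_rfl, ?_,
    C, hC, fun x y t _ ht => hmain x y t ht⟩
  intro x hx
  have hfun : (fun u : ℝ => |u| ^ (2 * N) * (A + B * Real.log |u|))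
      = fun u : ℝ => u ^ (2 * N) * (A + B * Real.log u) := by
    funext u
    rw [pow_mul, pow_mul, sq_abs, Real.log_abs]
  rw [hfun, iter_eq N A B (2 * N) le_rfl x hx, Real.log_abs]
  simp
end
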